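/- arXiv:2302.02560 — 10 statements merged into one kernel-verified Lean document; each statement's English description precedes it below -/
import Mathlib

section
/- Let (Ω, 𝓕, P) be a probability space with random variables X: Ω → ℝ^d, A, Ã: Ω → ℝ, Y: Ω → ℝ, with Y integrable. Let μ: ℝ^d × ℝ → ℝ be measurable such that μ(X, A) is a version of E[Y | σ(X, A)]. Let ρ be the law of X and κ, ν Markov kernels with law(X, A) = ρ ⊗ κ and law(X, Ã) = ρ ⊗ ν, and let w: ℝ^d × ℝ → ℝ be jointly measurable and nonnegative with, for ρ-a.e. x, ν(x) absolutely continuous with respect to κ(x) with density w(x, ·). Let ŵ, μ̂: ℝ^d × ℝ → ℝ be measurable with ŵ(X,A), μ̂(X,A), μ(X,A), w(X,A) essentially bounded and all displayed expectations finite, and set ψ = E[μ(X, Ã)]. Then E[ŵ(X, A)(Y − μ̂(X, A)) + μ̂(X, Ã) − ψ] = E[(ŵ(X, A) − w(X, A))·(μ(X, A) − μ̂(X, A))]. -/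
open MeasureTheory ProbabilityTheory

/-- Double-robustness identity (Proposition 1): the mean of the efficient influence function
`φ = ŵ(X, A)(Y − μ̂(X, A)) + μ̂(X, Ã) − ψ` at candidate nuisances `(μ̂, ŵ)` equals the
expected product of the nuisance errors `E[(ŵ(X, A) − w(X, A))(μ(X, A) − μ̂(X, A))]`. -/
theorem srf_eif_mean_identity
    {Ω : Type*} [MeasurableSpace Ω] (P : Measure Ω) [IsProbabilityMeasure P]
    {d : ℕ} (X : Ω → (Fin d → ℝ)) (A Atil : Ω → ℝ) (Y : Ω → ℝ)
    (hX : Measurable X) (hA : Measurable A) (hAtil : Measurable Atil) (hY : Measurable Y)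
    (hYint : Integrable Y P)
    -- `μ(X, A)` is a version of `E[Y | σ(X, A)]`
    (μ : (Fin d → ℝ) → ℝ → ℝ) (hμ : Measurable (Function.uncurry μ))
    (hμver : (fun ω => μ (X ω) (A ω)) =ᵐ[P]
      P[Y | MeasurableSpace.comap (fun ω => (X ω, A ω)) inferInstance])
    -- `w(x, ·)` is the density of the conditional law of `Ã` given `X = x` with respect to
    -- the conditional law of `A` given `X = x`
    (κ ν : Kernel (Fin d → ℝ) ℝ) [IsMarkovKernel κ] [IsMarkovKernel ν]
    (hκ : Measure.map (fun ω => (X ω, A ω)) P = (Measure.map X P).compProd κ)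
    (hν : Measure.map (fun ω => (X ω, Atil ω)) P = (Measure.map X P).compProd ν)
    (w : (Fin d → ℝ) → ℝ → ℝ) (hw : Measurable (Function.uncurry w))
    (hwnn : ∀ x a, 0 ≤ w x a)
    (hac : ∀ᵐ x ∂(Measure.map X P),
      ν x = (κ x).withDensity (fun a => ENNReal.ofReal (w x a)))
    -- candidate nuisance estimators
    (what μhat : (Fin d → ℝ) → ℝ → ℝ)
    (hwhat : Measurable (Function.uncurry what))
    (hμhat : Measurable (Function.uncurry μhat))
    -- essential boundedness
    (hwhat_bdd : ∃ C : ℝ, ∀ᵐ ω ∂P, |what (X ω) (A ω)| ≤ C)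
    (hμhat_bdd : ∃ C : ℝ, ∀ᵐ ω ∂P, |μhat (X ω) (A ω)| ≤ C)
    (hμ_bdd : ∃ C : ℝ, ∀ᵐ ω ∂P, |μ (X ω) (A ω)| ≤ C)
    (hw_bdd : ∃ C : ℝ, ∀ᵐ ω ∂P, |w (X ω) (A ω)| ≤ C)
    -- all displayed expectations are finite
    (hμAtil_int : Integrable (fun ω => μ (X ω) (Atil ω)) P)
    (hμhatAtil_int : Integrable (fun ω => μhat (X ω) (Atil ω)) P)
    (hdeb_int : Integrable (fun ω => what (X ω) (A ω) * (Y ω - μhat (X ω) (A ω))) P)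
    (hprod_int : Integrable (fun ω =>
      (what (X ω) (A ω) - w (X ω) (A ω)) * (μ (X ω) (A ω) - μhat (X ω) (A ω))) P) :
    ∫ ω, (what (X ω) (A ω) * (Y ω - μhat (X ω) (A ω)) + μhat (X ω) (Atil ω)
        - ∫ ω', μ (X ω') (Atil ω') ∂P) ∂P
      = ∫ ω, (what (X ω) (A ω) - w (X ω) (A ω))
          * (μ (X ω) (A ω) - μhat (X ω) (A ω)) ∂P := by
  classical
  have hXA : Measurable (fun ω => (X ω, A ω)) := hX.prodMk hA
  have hXAt : Measurable (fun ω => (X ω, Atil ω)) := hX.prodMk hAtil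
  have hm : MeasurableSpace.comap (fun ω => (X ω, A ω)) inferInstance
      ≤ (by infer_instance : MeasurableSpace Ω) := measurable_iff_comap_le.mp hXA
  -- measurability of the composed nuisances
  have mWhat : Measurable fun ω => what (X ω) (A ω) := hwhat.comp hXA
  have mMuhat : Measurable fun ω => μhat (X ω) (A ω) := hμhat.comp hXA
  have mMu : Measurable fun ω => μ (X ω) (A ω) := hμ.comp hXA
  have mW : Measurable fun ω => w (X ω) (A ω) := hw.comp hXA
  -- integrability of products of essentially bounded functions
  have int_mul : ∀ {f g : Ω → ℝ}, Measurable f → Measurable g →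
      (∃ C : ℝ, ∀ᵐ ω ∂P, |f ω| ≤ C) → (∃ C : ℝ, ∀ᵐ ω ∂P, |g ω| ≤ C) →
      Integrable (fun ω => f ω * g ω) P := by
    rintro f g hf hg ⟨C1, h1⟩ ⟨C2, h2⟩
    refine (integrable_const (C1 * C2)).mono' (hf.mul hg).aestronglyMeasurable ?_
    filter_upwards [h1, h2] with ω h1 h2
    calc ‖f ω * g ω‖ = |f ω| * |g ω| := abs_mul _ _
      _ ≤ C1 * C2 := mul_le_mul h1 h2 (abs_nonneg _) ((abs_nonneg (f ω)).trans h1)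
  have hμdiff_bdd : ∃ C : ℝ, ∀ᵐ ω ∂P, |μhat (X ω) (A ω) - μ (X ω) (A ω)| ≤ C := by
    obtain ⟨C1, h1⟩ := hμhat_bdd; obtain ⟨C2, h2⟩ := hμ_bdd
    refine ⟨C1 + C2, ?_⟩
    filter_upwards [h1, h2] with ω h1 h2
    calc |μhat (X ω) (A ω) - μ (X ω) (A ω)|
        ≤ |μhat (X ω) (A ω)| + |μ (X ω) (A ω)| := abs_sub _ _
      _ ≤ C1 + C2 := add_le_add h1 h2
  have I1int : Integrable (fun ω => what (X ω) (A ω) * μ (X ω) (A ω)) P :=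
    int_mul mWhat mMu hwhat_bdd hμ_bdd
  have I2int : Integrable (fun ω => what (X ω) (A ω) * μhat (X ω) (A ω)) P :=
    int_mul mWhat mMuhat hwhat_bdd hμhat_bdd
  have I3int : Integrable (fun ω => w (X ω) (A ω) * μ (X ω) (A ω)) P :=
    int_mul mW mMu hw_bdd hμ_bdd
  have I4int : Integrable (fun ω => w (X ω) (A ω) * μhat (X ω) (A ω)) P :=
    int_mul mW mMuhat hw_bdd hμhat_bdd
  have hwhatY_int : Integrable (fun ω => what (X ω) (A ω) * Y ω) P := by
    have h := hdeb_int.add I2int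
    refine h.congr (Filter.Eventually.of_forall fun ω => ?_)
    simp only [Pi.add_apply]; ring
  -- Step 1: conditional expectation step
  have hsmWhat : StronglyMeasurable[MeasurableSpace.comap (fun ω => (X ω, A ω)) inferInstance]
      (fun ω => what (X ω) (A ω)) := by
    have hXAm : Measurable[MeasurableSpace.comap (fun ω => (X ω, A ω)) inferInstance]
        (fun ω => (X ω, A ω)) := Measurable.of_comap_le le_rfl
    exact (hwhat.comp hXAm).stronglyMeasurable
  have step1 : ∫ ω, what (X ω) (A ω) * Y ω ∂P
      = ∫ ω, what (X ω) (A ω) * μ (X ω) (A ω) ∂P := by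
    have hFYint : Integrable ((fun ω => what (X ω) (A ω)) * Y) P := hwhatY_int
    have hpull := condExp_mul_of_stronglyMeasurable_left hsmWhat hFYint hYint
    have h0 : ∫ ω, ((fun ω => what (X ω) (A ω)) * Y) ω ∂P
        = ∫ ω, (P[(fun ω => what (X ω) (A ω)) * Y
            | MeasurableSpace.comap (fun ω => (X ω, A ω)) inferInstance]) ω ∂P :=
      (integral_condExp hm).symm
    have h1 : ∫ ω, (P[(fun ω => what (X ω) (A ω)) * Y
          | MeasurableSpace.comap (fun ω => (X ω, A ω)) inferInstance]) ω ∂P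
        = ∫ ω, what (X ω) (A ω) * μ (X ω) (A ω) ∂P := by
      refine integral_congr_ae ?_
      filter_upwards [hpull, hμver] with ω h1 h2
      rw [h1]
      simp only [Pi.mul_apply]
      rw [← h2]
    exact h0.trans h1
  -- Step 2: the shift / density-ratio step
  set ρ : Measure (Fin d → ℝ) := Measure.map X P with hρ_def
  haveI : IsProbabilityMeasure ρ := Measure.isProbabilityMeasure_map hX.aemeasurable
  have hfν_meas : Measurable (fun p : (Fin d → ℝ) × ℝ => μhat p.1 p.2 - μ p.1 p.2) :=
    hμhat.sub hμ
  have hg_meas : Measurable (fun p : (Fin d → ℝ) × ℝ =>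
      w p.1 p.2 * (μhat p.1 p.2 - μ p.1 p.2)) := hw.mul hfν_meas
  have hfν_int : Integrable (fun p : (Fin d → ℝ) × ℝ => μhat p.1 p.2 - μ p.1 p.2)
      (ρ.compProd ν) := by
    rw [hρ_def, ← hν]
    exact (integrable_map_measure hfν_meas.aestronglyMeasurable hXAt.aemeasurable).mpr
      (hμhatAtil_int.sub hμAtil_int)
  have hgκ_int : Integrable (fun p : (Fin d → ℝ) × ℝ =>
      w p.1 p.2 * (μhat p.1 p.2 - μ p.1 p.2)) (ρ.compProd κ) := by
    rw [hρ_def, ← hκ]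
    refine (integrable_map_measure hg_meas.aestronglyMeasurable hXA.aemeasurable).mpr ?_
    exact int_mul mW (mMuhat.sub mMu) hw_bdd hμdiff_bdd
  have hA1 : ∫ ω, (μhat (X ω) (Atil ω) - μ (X ω) (Atil ω)) ∂P
      = ∫ p, (μhat p.1 p.2 - μ p.1 p.2) ∂(ρ.compProd ν) := by
    rw [hρ_def, ← hν, integral_map hXAt.aemeasurable hfν_meas.aestronglyMeasurable]
  have hA2 : ∫ p, (μhat p.1 p.2 - μ p.1 p.2) ∂(ρ.compProd ν)
      = ∫ p, w p.1 p.2 * (μhat p.1 p.2 - μ p.1 p.2) ∂(ρ.compProd κ) := by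
    rw [Measure.integral_compProd hfν_int, Measure.integral_compProd hgκ_int]
    refine integral_congr_ae ?_
    filter_upwards [hac] with x hx
    rw [hx]
    have hwx : Measurable fun a => (w x a).toNNReal := (hw.of_uncurry_left).real_toNNReal
    have hrw : (κ x).withDensity (fun a => ENNReal.ofReal (w x a))
        = (κ x).withDensity (fun a => (ENNReal.ofNNReal (w x a).toNNReal)) := rfl
    rw [hrw, integral_withDensity_eq_integral_smul hwx]
    refine integral_congr_ae (Filter.Eventually.of_forall fun a => ?_)
    simp [NNReal.smul_def, Real.coe_toNNReal _ (hwnn x a)]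
  have hA3 : ∫ p, w p.1 p.2 * (μhat p.1 p.2 - μ p.1 p.2) ∂(ρ.compProd κ)
      = ∫ ω, w (X ω) (A ω) * (μhat (X ω) (A ω) - μ (X ω) (A ω)) ∂P := by
    rw [hρ_def, ← hκ, integral_map hXA.aemeasurable hg_meas.aestronglyMeasurable]
  -- Assemble
  have step2 : ∫ ω, μhat (X ω) (Atil ω) ∂P - ∫ ω', μ (X ω') (Atil ω') ∂P
      = ∫ ω, w (X ω) (A ω) * μhat (X ω) (A ω) ∂P
        - ∫ ω, w (X ω) (A ω) * μ (X ω) (A ω) ∂P := by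
    have h1 : ∫ ω, (μhat (X ω) (Atil ω) - μ (X ω) (Atil ω)) ∂P
        = ∫ ω, μhat (X ω) (Atil ω) ∂P - ∫ ω', μ (X ω') (Atil ω') ∂P :=
      integral_sub hμhatAtil_int hμAtil_int
    have h2 : ∫ ω, w (X ω) (A ω) * (μhat (X ω) (A ω) - μ (X ω) (A ω)) ∂P
        = ∫ ω, w (X ω) (A ω) * μhat (X ω) (A ω) ∂P
          - ∫ ω, w (X ω) (A ω) * μ (X ω) (A ω) ∂P := by
      rw [show (fun ω => w (X ω) (A ω) * (μhat (X ω) (A ω) - μ (X ω) (A ω)))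
          = fun ω => w (X ω) (A ω) * μhat (X ω) (A ω)
            - w (X ω) (A ω) * μ (X ω) (A ω) from funext fun ω => mul_sub _ _ _]
      exact integral_sub I4int I3int
    rw [← h1, ← h2, hA1, hA2, hA3]
  -- left-hand side
  have hT_int : Integrable (fun ω => what (X ω) (A ω) * (Y ω - μhat (X ω) (A ω))
      + μhat (X ω) (Atil ω)) P := hdeb_int.add hμhatAtil_int
  have hLHS : ∫ ω, (what (X ω) (A ω) * (Y ω - μhat (X ω) (A ω)) + μhat (X ω) (Atil ω)
      - ∫ ω', μ (X ω') (Atil ω') ∂P) ∂P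
      = ∫ ω, what (X ω) (A ω) * Y ω ∂P
        - ∫ ω, what (X ω) (A ω) * μhat (X ω) (A ω) ∂P
        + (∫ ω, μhat (X ω) (Atil ω) ∂P - ∫ ω', μ (X ω') (Atil ω') ∂P) := by
    rw [integral_sub hT_int (integrable_const _), integral_const,
      integral_add hdeb_int hμhatAtil_int]
    have : ∫ ω, what (X ω) (A ω) * (Y ω - μhat (X ω) (A ω)) ∂P
        = ∫ ω, what (X ω) (A ω) * Y ω ∂P
          - ∫ ω, what (X ω) (A ω) * μhat (X ω) (A ω) ∂P := by
      rw [show (fun ω => what (X ω) (A ω) * (Y ω - μhat (X ω) (A ω)))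
          = fun ω => what (X ω) (A ω) * Y ω
            - what (X ω) (A ω) * μhat (X ω) (A ω) from funext fun ω => mul_sub _ _ _]
      exact integral_sub hwhatY_int I2int
    rw [this]
    simp [measure_univ]
    ring
  -- right-hand side
  have hRHS : ∫ ω, (what (X ω) (A ω) - w (X ω) (A ω))
      * (μ (X ω) (A ω) - μhat (X ω) (A ω)) ∂P
      = ∫ ω, what (X ω) (A ω) * μ (X ω) (A ω) ∂P
        - ∫ ω, what (X ω) (A ω) * μhat (X ω) (A ω) ∂P
        - ∫ ω, w (X ω) (A ω) * μ (X ω) (A ω) ∂P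
        + ∫ ω, w (X ω) (A ω) * μhat (X ω) (A ω) ∂P := by
    rw [show (fun ω => (what (X ω) (A ω) - w (X ω) (A ω))
        * (μ (X ω) (A ω) - μhat (X ω) (A ω)))
        = fun ω => (what (X ω) (A ω) * μ (X ω) (A ω)
            - what (X ω) (A ω) * μhat (X ω) (A ω))
          - (w (X ω) (A ω) * μ (X ω) (A ω)
            - w (X ω) (A ω) * μhat (X ω) (A ω)) from funext fun ω => by ring]
    have J1 : Integrable (fun ω => what (X ω) (A ω) * μ (X ω) (A ω)
        - what (X ω) (A ω) * μhat (X ω) (A ω)) P := I1int.sub I2int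
    have J2 : Integrable (fun ω => w (X ω) (A ω) * μ (X ω) (A ω)
        - w (X ω) (A ω) * μhat (X ω) (A ω)) P := I3int.sub I4int
    rw [integral_sub J1 J2, integral_sub I1int I2int, integral_sub I3int I4int]
    ring
  rw [hLHS, hRHS, step1, step2]
  ring
end

section
/- In the setting of the double-robustness identity — a probability space with X: Ω → ℝ^d, A, Ã: Ω → ℝ, Y integrable; μ(X, A) a version of E[Y | σ(X, A)]; w(x,·) the density of the conditional law of Ã given X = x with respect to the conditional law of A given X = x; ŵ, μ̂ measurable with all relevant quantities essentially bounded and integrable; ψ = E[μ(X, Ã)] — if either μ̂(X, A) = μ(X, A) almost surely, or ŵ(X, A) = w(X, A) almost surely, then E[ŵ(X, A)(Y − μ̂(X, A)) + μ̂(X, Ã) − ψ] = 0. -/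
open MeasureTheory ProbabilityTheory

/-- A measurable, a.e.-bounded function on a probability space is integrable. -/
lemma srf_int_of_bdd {Ω : Type*} [MeasurableSpace Ω] (P : Measure Ω) [IsProbabilityMeasure P]
    {f : Ω → ℝ} (hf : AEStronglyMeasurable f P) (h : ∃ C : ℝ, ∀ᵐ ω ∂P, |f ω| ≤ C) :
    Integrable f P := by
  obtain ⟨C, hC⟩ := h
  exact (memLp_top_of_bound hf C (by simpa [Real.norm_eq_abs] using hC)).integrable le_top

/-- Transfer identity: integrating `w(X,A) g(X,A)` equals integrating `g(X, Ã)` when `w(x, ·)`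
is the density of the conditional law of `Ã` w.r.t. that of `A`. -/
lemma srf_transfer {Ω : Type*} [MeasurableSpace Ω] (P : Measure Ω) [IsProbabilityMeasure P]
    {d : ℕ} (X : Ω → (Fin d → ℝ)) (A Atil : Ω → ℝ)
    (hX : Measurable X) (hA : Measurable A) (hAtil : Measurable Atil)
    (κ ν : Kernel (Fin d → ℝ) ℝ) [IsMarkovKernel κ] [IsMarkovKernel ν]
    (hκ : Measure.map (fun ω => (X ω, A ω)) P = (Measure.map X P).compProd κ)
    (hν : Measure.map (fun ω => (X ω, Atil ω)) P = (Measure.map X P).compProd ν)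
    (w : (Fin d → ℝ) → ℝ → ℝ) (hw : Measurable (Function.uncurry w))
    (hwnn : ∀ x a, 0 ≤ w x a)
    (hac : ∀ᵐ x ∂(Measure.map X P),
      ν x = (κ x).withDensity (fun a => ENNReal.ofReal (w x a)))
    (g : (Fin d → ℝ) → ℝ → ℝ) (hg : Measurable (Function.uncurry g))
    (hint1 : Integrable (fun ω => w (X ω) (A ω) * g (X ω) (A ω)) P)
    (hint2 : Integrable (fun ω => g (X ω) (Atil ω)) P) :
    ∫ ω, w (X ω) (A ω) * g (X ω) (A ω) ∂P = ∫ ω, g (X ω) (Atil ω) ∂P := by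
  have hXA : Measurable fun ω => (X ω, A ω) := hX.prodMk hA
  have hXAt : Measurable fun ω => (X ω, Atil ω) := hX.prodMk hAtil
  have hwg : Measurable fun p : (Fin d → ℝ) × ℝ => w p.1 p.2 * g p.1 p.2 := hw.mul hg
  have hgm : Measurable fun p : (Fin d → ℝ) × ℝ => g p.1 p.2 := hg
  have hI1 : Integrable (fun p : (Fin d → ℝ) × ℝ => w p.1 p.2 * g p.1 p.2)
      ((Measure.map X P).compProd κ) := by
    rw [← hκ, integrable_map_measure hwg.aestronglyMeasurable hXA.aemeasurable]
    exact hint1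
  have hI2 : Integrable (fun p : (Fin d → ℝ) × ℝ => g p.1 p.2)
      ((Measure.map X P).compProd ν) := by
    rw [← hν, integrable_map_measure hgm.aestronglyMeasurable hXAt.aemeasurable]
    exact hint2
  calc ∫ ω, w (X ω) (A ω) * g (X ω) (A ω) ∂P
      = ∫ p : (Fin d → ℝ) × ℝ, w p.1 p.2 * g p.1 p.2
          ∂(Measure.map (fun ω => (X ω, A ω)) P) :=
        (integral_map hXA.aemeasurable hwg.aestronglyMeasurable).symm
    _ = ∫ x, ∫ a, w x a * g x a ∂(κ x) ∂(Measure.map X P) := by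
        rw [hκ]; exact Measure.integral_compProd hI1
    _ = ∫ x, ∫ a, g x a ∂(ν x) ∂(Measure.map X P) := by
        refine integral_congr_ae ?_
        filter_upwards [hac] with x hx
        have hmeas : Measurable fun a => Real.toNNReal (w x a) :=
          measurable_real_toNNReal.comp (hw.comp measurable_prodMk_left)
        rw [hx, show (fun a => ENNReal.ofReal (w x a))
              = fun a => ((Real.toNNReal (w x a) : NNReal) : ENNReal) from rfl,
          integral_withDensity_eq_integral_smul hmeas]
        refine integral_congr_ae (Filter.Eventually.of_forall fun a => ?_)
        simp [NNReal.smul_def, Real.coe_toNNReal _ (hwnn x a)]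
    _ = ∫ p : (Fin d → ℝ) × ℝ, g p.1 p.2 ∂((Measure.map X P).compProd ν) :=
        (Measure.integral_compProd hI2).symm
    _ = ∫ ω, g (X ω) (Atil ω) ∂P := by
        rw [← hν, integral_map hXAt.aemeasurable hgm.aestronglyMeasurable]

/-- Double robustness (Proposition 1): the population estimating equation `E[φ] = 0` holds
if either the outcome model or the density-ratio model is correctly specified. -/
theorem srf_double_robustness
    {Ω : Type*} [MeasurableSpace Ω] (P : Measure Ω) [IsProbabilityMeasure P]
    {d : ℕ} (X : Ω → (Fin d → ℝ)) (A Atil : Ω → ℝ) (Y : Ω → ℝ)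
    (hX : Measurable X) (hA : Measurable A) (hAtil : Measurable Atil) (hY : Measurable Y)
    (hYint : Integrable Y P)
    -- `μ(X, A)` is a version of `E[Y | σ(X, A)]`
    (μ : (Fin d → ℝ) → ℝ → ℝ) (hμ : Measurable (Function.uncurry μ))
    (hμver : (fun ω => μ (X ω) (A ω)) =ᵐ[P]
      P[Y | MeasurableSpace.comap (fun ω => (X ω, A ω)) inferInstance])
    -- `w(x, ·)` is the density of the conditional law of `Ã` given `X = x` with respect to
    -- the conditional law of `A` given `X = x`
    (κ ν : Kernel (Fin d → ℝ) ℝ) [IsMarkovKernel κ] [IsMarkovKernel ν]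
    (hκ : Measure.map (fun ω => (X ω, A ω)) P = (Measure.map X P).compProd κ)
    (hν : Measure.map (fun ω => (X ω, Atil ω)) P = (Measure.map X P).compProd ν)
    (w : (Fin d → ℝ) → ℝ → ℝ) (hw : Measurable (Function.uncurry w))
    (hwnn : ∀ x a, 0 ≤ w x a)
    (hac : ∀ᵐ x ∂(Measure.map X P),
      ν x = (κ x).withDensity (fun a => ENNReal.ofReal (w x a)))
    -- candidate nuisance estimators
    (what μhat : (Fin d → ℝ) → ℝ → ℝ)
    (hwhat : Measurable (Function.uncurry what))
    (hμhat : Measurable (Function.uncurry μhat))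
    -- essential boundedness
    (hwhat_bdd : ∃ C : ℝ, ∀ᵐ ω ∂P, |what (X ω) (A ω)| ≤ C)
    (hμhat_bdd : ∃ C : ℝ, ∀ᵐ ω ∂P, |μhat (X ω) (A ω)| ≤ C)
    (hμ_bdd : ∃ C : ℝ, ∀ᵐ ω ∂P, |μ (X ω) (A ω)| ≤ C)
    (hw_bdd : ∃ C : ℝ, ∀ᵐ ω ∂P, |w (X ω) (A ω)| ≤ C)
    -- all displayed expectations are finite
    (hμAtil_int : Integrable (fun ω => μ (X ω) (Atil ω)) P)
    (hμhatAtil_int : Integrable (fun ω => μhat (X ω) (Atil ω)) P)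
    (hdeb_int : Integrable (fun ω => what (X ω) (A ω) * (Y ω - μhat (X ω) (A ω))) P)
    (hprod_int : Integrable (fun ω =>
      (what (X ω) (A ω) - w (X ω) (A ω)) * (μ (X ω) (A ω) - μhat (X ω) (A ω))) P)
    -- either the outcome model or the density-ratio model is correctly specified
    (hcorrect : ((fun ω => μhat (X ω) (A ω)) =ᵐ[P] (fun ω => μ (X ω) (A ω)))
      ∨ ((fun ω => what (X ω) (A ω)) =ᵐ[P] (fun ω => w (X ω) (A ω)))) :
    ∫ ω, (what (X ω) (A ω) * (Y ω - μhat (X ω) (A ω)) + μhat (X ω) (Atil ω)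
        - ∫ ω', μ (X ω') (Atil ω') ∂P) ∂P = 0 := by
  have hXA : Measurable fun ω => (X ω, A ω) := hX.prodMk hA
  have hm := hXA.comap_le
  -- measurability of composed nuisances
  have hwhatXA : Measurable fun ω => what (X ω) (A ω) := hwhat.comp hXA
  have hμXA : Measurable fun ω => μ (X ω) (A ω) := hμ.comp hXA
  have hμhatXA : Measurable fun ω => μhat (X ω) (A ω) := hμhat.comp hXA
  have hwXA : Measurable fun ω => w (X ω) (A ω) := hw.comp hXA
  -- integrability facts
  have IμA : Integrable (fun ω => μ (X ω) (A ω)) P :=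
    srf_int_of_bdd P hμXA.aestronglyMeasurable hμ_bdd
  have IμhatA : Integrable (fun ω => μhat (X ω) (A ω)) P :=
    srf_int_of_bdd P hμhatXA.aestronglyMeasurable hμhat_bdd
  obtain ⟨Cw, hCw⟩ := hwhat_bdd
  have hCw' : ∀ᵐ ω ∂P, ‖what (X ω) (A ω)‖ ≤ Cw := by
    simpa [Real.norm_eq_abs] using hCw
  have IwhatY : Integrable (fun ω => what (X ω) (A ω) * Y ω) P :=
    hYint.bdd_mul hwhatXA.aestronglyMeasurable hCw'
  have Iwhatμ : Integrable (fun ω => what (X ω) (A ω) * μ (X ω) (A ω)) P :=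
    IμA.bdd_mul hwhatXA.aestronglyMeasurable hCw'
  have Iwhatμhat : Integrable (fun ω => what (X ω) (A ω) * μhat (X ω) (A ω)) P :=
    IμhatA.bdd_mul hwhatXA.aestronglyMeasurable hCw'
  obtain ⟨Cww, hCww⟩ := hw_bdd
  have hCww' : ∀ᵐ ω ∂P, ‖w (X ω) (A ω)‖ ≤ Cww := by
    simpa [Real.norm_eq_abs] using hCww
  have IwD : Integrable (fun ω => w (X ω) (A ω) * (μ (X ω) (A ω) - μhat (X ω) (A ω))) P :=
    (IμA.sub IμhatA).bdd_mul hwXA.aestronglyMeasurable hCww'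
  -- Step 1: `∫ ŵ(X,A) Y = ∫ ŵ(X,A) μ(X,A)` by the tower property.
  have hXAm : Measurable[MeasurableSpace.comap (fun ω => (X ω, A ω)) inferInstance]
      fun ω => (X ω, A ω) := Measurable.of_comap_le le_rfl
  have hwhatm : StronglyMeasurable[MeasurableSpace.comap (fun ω => (X ω, A ω)) inferInstance]
      fun ω => what (X ω) (A ω) :=
    (hwhat.comp hXAm).stronglyMeasurable
  have hpull : P[(fun ω => what (X ω) (A ω)) * Y |
        MeasurableSpace.comap (fun ω => (X ω, A ω)) inferInstance]
      =ᵐ[P] (fun ω => what (X ω) (A ω))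
        * P[Y | MeasurableSpace.comap (fun ω => (X ω, A ω)) inferInstance] :=
    condExp_mul_of_stronglyMeasurable_left hwhatm (by exact IwhatY) hYint
  have step1 : ∫ ω, what (X ω) (A ω) * Y ω ∂P
      = ∫ ω, what (X ω) (A ω) * μ (X ω) (A ω) ∂P := by
    calc ∫ ω, what (X ω) (A ω) * Y ω ∂P
        = ∫ ω, (P[(fun ω => what (X ω) (A ω)) * Y |
            MeasurableSpace.comap (fun ω => (X ω, A ω)) inferInstance]) ω ∂P :=
          (integral_condExp hm).symm
      _ = ∫ ω, what (X ω) (A ω)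
            * (P[Y | MeasurableSpace.comap (fun ω => (X ω, A ω)) inferInstance]) ω ∂P := by
          refine integral_congr_ae ?_
          filter_upwards [hpull] with ω h
          simpa using h
      _ = ∫ ω, what (X ω) (A ω) * μ (X ω) (A ω) ∂P := by
          refine integral_congr_ae ?_
          filter_upwards [hμver] with ω h
          rw [← h]
  -- Step 2: transfer identity with `g = μ - μ̂`.
  have step2 : ∫ ω, w (X ω) (A ω) * (μ (X ω) (A ω) - μhat (X ω) (A ω)) ∂P
      = ∫ ω, (μ (X ω) (Atil ω) - μhat (X ω) (Atil ω)) ∂P := by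
    have := srf_transfer P X A Atil hX hA hAtil κ ν hκ hν w hw hwnn hac
      (fun x a => μ x a - μhat x a) (hμ.sub hμhat) IwD (hμAtil_int.sub hμhatAtil_int)
    exact this
  -- Step 3: the cross term vanishes under either correct specification.
  have step3 : ∫ ω, (what (X ω) (A ω) - w (X ω) (A ω))
      * (μ (X ω) (A ω) - μhat (X ω) (A ω)) ∂P = 0 := by
    have hzero : (fun ω => (what (X ω) (A ω) - w (X ω) (A ω))
        * (μ (X ω) (A ω) - μhat (X ω) (A ω))) =ᵐ[P] fun _ => (0 : ℝ) := by
      rcases hcorrect with h | h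
      · filter_upwards [h] with ω hω
        simp [hω]
      · filter_upwards [h] with ω hω
        simp [hω]
    rw [integral_congr_ae hzero, integral_zero]
  -- Assemble everything.
  set ψ : ℝ := ∫ ω', μ (X ω') (Atil ω') ∂P with hψ
  have hdeb : ∫ ω, what (X ω) (A ω) * (Y ω - μhat (X ω) (A ω)) ∂P
      = ψ - ∫ ω, μhat (X ω) (Atil ω) ∂P := by
    have e1 : ∫ ω, what (X ω) (A ω) * (Y ω - μhat (X ω) (A ω)) ∂P
        = ∫ ω, what (X ω) (A ω) * Y ω ∂P
          - ∫ ω, what (X ω) (A ω) * μhat (X ω) (A ω) ∂P := by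
      rw [← integral_sub IwhatY Iwhatμhat]
      refine integral_congr_ae (Filter.Eventually.of_forall fun ω => ?_)
      ring
    have e2 : ∫ ω, what (X ω) (A ω) * μ (X ω) (A ω) ∂P
        - ∫ ω, what (X ω) (A ω) * μhat (X ω) (A ω) ∂P
        = ∫ ω, (what (X ω) (A ω) - w (X ω) (A ω))
            * (μ (X ω) (A ω) - μhat (X ω) (A ω)) ∂P
          + ∫ ω, w (X ω) (A ω) * (μ (X ω) (A ω) - μhat (X ω) (A ω)) ∂P := by
      rw [← integral_sub Iwhatμ Iwhatμhat, ← integral_add hprod_int IwD]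
      refine integral_congr_ae (Filter.Eventually.of_forall fun ω => ?_)
      ring
    have e3 : ∫ ω, (μ (X ω) (Atil ω) - μhat (X ω) (Atil ω)) ∂P
        = ψ - ∫ ω, μhat (X ω) (Atil ω) ∂P :=
      integral_sub hμAtil_int hμhatAtil_int
    rw [e1, step1, e2, step3, step2, e3]
    ring
  have hfinal : ∫ ω, (what (X ω) (A ω) * (Y ω - μhat (X ω) (A ω)) + μhat (X ω) (Atil ω)
      - ψ) ∂P
      = (∫ ω, what (X ω) (A ω) * (Y ω - μhat (X ω) (A ω)) ∂P
        + ∫ ω, μhat (X ω) (Atil ω) ∂P) - ψ := by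
    have h1 := integral_sub (hdeb_int.add hμhatAtil_int) (integrable_const ψ)
    have h2 := integral_add hdeb_int hμhatAtil_int
    simp only [Pi.add_apply] at h1 h2
    rw [h1, h2, integral_const]
    simp
  rw [hfinal, hdeb]
  ring
end

section
/- In the setting of the double-robustness identity — a probability space with X: Ω → ℝ^d, A, Ã: Ω → ℝ, Y integrable; μ(X, A) a version of E[Y | σ(X, A)]; w(x,·) the density of the conditional law of Ã given X = x with respect to the conditional law of A given X = x; ŵ, μ̂ measurable with all relevant quantities essentially bounded and integrable; ψ = E[μ(X, Ã)] — suppose |ŵ(X, A) − w(X, A)| ≤ r₂ almost surely and |μ̂(X, A) − μ(X, A)| ≤ r₁ almost surely, for constants r₁, r₂ ≥ 0. Then |E[ŵ(X, A)(Y − μ̂(X, A)) + μ̂(X, Ã) − ψ]| ≤ r₁ · r₂. -/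
open MeasureTheory ProbabilityTheory
open scoped ENNReal NNReal

/-- Quantitative product-bias bound (Proposition 1): the bias of the population estimating
equation is bounded by the product of the sup-norm errors of the two nuisance estimators. -/
theorem srf_product_bias_bound
    {Ω : Type*} [MeasurableSpace Ω] (P : Measure Ω) [IsProbabilityMeasure P]
    {d : ℕ} (X : Ω → (Fin d → ℝ)) (A Atil : Ω → ℝ) (Y : Ω → ℝ)
    (hX : Measurable X) (hA : Measurable A) (hAtil : Measurable Atil) (hY : Measurable Y)
    (hYint : Integrable Y P)
    -- `μ(X, A)` is a version of `E[Y | σ(X, A)]`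
    (μ : (Fin d → ℝ) → ℝ → ℝ) (hμ : Measurable (Function.uncurry μ))
    (hμver : (fun ω => μ (X ω) (A ω)) =ᵐ[P]
      P[Y | MeasurableSpace.comap (fun ω => (X ω, A ω)) inferInstance])
    -- `w(x, ·)` is the density of the conditional law of `Ã` given `X = x` with respect to
    -- the conditional law of `A` given `X = x`
    (κ ν : Kernel (Fin d → ℝ) ℝ) [IsMarkovKernel κ] [IsMarkovKernel ν]
    (hκ : Measure.map (fun ω => (X ω, A ω)) P = (Measure.map X P).compProd κ)
    (hν : Measure.map (fun ω => (X ω, Atil ω)) P = (Measure.map X P).compProd ν)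
    (w : (Fin d → ℝ) → ℝ → ℝ) (hw : Measurable (Function.uncurry w))
    (hwnn : ∀ x a, 0 ≤ w x a)
    (hac : ∀ᵐ x ∂(Measure.map X P),
      ν x = (κ x).withDensity (fun a => ENNReal.ofReal (w x a)))
    -- candidate nuisance estimators
    (what μhat : (Fin d → ℝ) → ℝ → ℝ)
    (hwhat : Measurable (Function.uncurry what))
    (hμhat : Measurable (Function.uncurry μhat))
    -- essential boundedness
    (hwhat_bdd : ∃ C : ℝ, ∀ᵐ ω ∂P, |what (X ω) (A ω)| ≤ C)
    (hμhat_bdd : ∃ C : ℝ, ∀ᵐ ω ∂P, |μhat (X ω) (A ω)| ≤ C)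
    (hμ_bdd : ∃ C : ℝ, ∀ᵐ ω ∂P, |μ (X ω) (A ω)| ≤ C)
    (hw_bdd : ∃ C : ℝ, ∀ᵐ ω ∂P, |w (X ω) (A ω)| ≤ C)
    -- all displayed expectations are finite
    (hμAtil_int : Integrable (fun ω => μ (X ω) (Atil ω)) P)
    (hμhatAtil_int : Integrable (fun ω => μhat (X ω) (Atil ω)) P)
    (hdeb_int : Integrable (fun ω => what (X ω) (A ω) * (Y ω - μhat (X ω) (A ω))) P)
    (hprod_int : Integrable (fun ω =>
      (what (X ω) (A ω) - w (X ω) (A ω)) * (μ (X ω) (A ω) - μhat (X ω) (A ω))) P)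
    -- sup-norm errors of the nuisance estimators
    {r₁ r₂ : ℝ} (hr₁0 : 0 ≤ r₁) (hr₂0 : 0 ≤ r₂)
    (hr₂ : ∀ᵐ ω ∂P, |what (X ω) (A ω) - w (X ω) (A ω)| ≤ r₂)
    (hr₁ : ∀ᵐ ω ∂P, |μhat (X ω) (A ω) - μ (X ω) (A ω)| ≤ r₁) :
    |∫ ω, (what (X ω) (A ω) * (Y ω - μhat (X ω) (A ω)) + μhat (X ω) (Atil ω)
        - ∫ ω', μ (X ω') (Atil ω') ∂P) ∂P| ≤ r₁ * r₂ := by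
  classical
  obtain ⟨Cw, hCw⟩ := hwhat_bdd
  obtain ⟨Cmh, hCmh⟩ := hμhat_bdd
  obtain ⟨Cm, hCm⟩ := hμ_bdd
  obtain ⟨Cww, hCww⟩ := hw_bdd
  have hφ : Measurable fun ω => (X ω, A ω) := hX.prodMk hA
  have hψm : Measurable fun ω => (X ω, Atil ω) := hX.prodMk hAtil
  haveI : IsProbabilityMeasure (Measure.map X P) :=
    Measure.isProbabilityMeasure_map hX.aemeasurable
  -- basic measurability of composed maps
  have hwXA : Measurable fun ω => w (X ω) (A ω) := hw.comp hφ
  have hwhatXA : Measurable fun ω => what (X ω) (A ω) := hwhat.comp hφ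
  have hμXA : Measurable fun ω => μ (X ω) (A ω) := hμ.comp hφ
  have hμhatXA : Measurable fun ω => μhat (X ω) (A ω) := hμhat.comp hφ
  -- integrability of bounded measurable functions
  have hbdd_int : ∀ (g : Ω → ℝ), Measurable g → (∃ C : ℝ, ∀ᵐ ω ∂P, |g ω| ≤ C) →
      Integrable g P := by
    rintro g hg ⟨C, hC⟩
    refine Integrable.mono' (integrable_const C) hg.aestronglyMeasurable ?_
    filter_upwards [hC] with ω hω
    simpa [Real.norm_eq_abs] using hω
  have hμint : Integrable (fun ω => μ (X ω) (A ω)) P :=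
    integrable_condExp.congr hμver.symm
  have hμhatXA_int : Integrable (fun ω => μhat (X ω) (A ω)) P :=
    hbdd_int _ hμhatXA ⟨Cmh, hCmh⟩
  -- change of measure: E[f(X, Ã)] = E[w(X,A) f(X,A)]
  have key : ∀ f : (Fin d → ℝ) → ℝ → ℝ, Measurable (Function.uncurry f) →
      Integrable (fun ω => f (X ω) (Atil ω)) P →
      Integrable (fun ω => w (X ω) (A ω) * f (X ω) (A ω)) P →
      ∫ ω, f (X ω) (Atil ω) ∂P = ∫ ω, w (X ω) (A ω) * f (X ω) (A ω) ∂P := by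
    intro f hf hint1 hint2
    have h1 : ∫ ω, f (X ω) (Atil ω) ∂P
        = ∫ p, Function.uncurry f p ∂(Measure.map (fun ω => (X ω, Atil ω)) P) := by
      rw [integral_map hψm.aemeasurable hf.aestronglyMeasurable]
      rfl
    have hint1' : Integrable (Function.uncurry f) ((Measure.map X P).compProd ν) := by
      rw [← hν]
      exact (integrable_map_measure hf.aestronglyMeasurable hψm.aemeasurable).mpr hint1
    have h2 : ∫ p, Function.uncurry f p ∂((Measure.map X P).compProd ν)
        = ∫ x, ∫ a, f x a ∂(ν x) ∂(Measure.map X P) :=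
      Measure.integral_compProd hint1'
    have h3 : ∀ᵐ x ∂(Measure.map X P),
        ∫ a, f x a ∂(ν x) = ∫ a, w x a * f x a ∂(κ x) := by
      filter_upwards [hac] with x hx
      have hwx : Measurable fun a => (w x a).toNNReal :=
        measurable_real_toNNReal.comp (hw.comp measurable_prodMk_left)
      have hdens : (fun a => ENNReal.ofReal (w x a))
          = fun a => ((w x a).toNNReal : ℝ≥0∞) := rfl
      rw [hx, hdens, integral_withDensity_eq_integral_smul hwx]
      refine integral_congr_ae (Filter.Eventually.of_forall fun a => ?_)
      simp [NNReal.smul_def, Real.coe_toNNReal _ (hwnn x a)]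
    have hint2' : Integrable (fun p : (Fin d → ℝ) × ℝ => w p.1 p.2 * Function.uncurry f p)
        ((Measure.map X P).compProd κ) := by
      rw [← hκ]
      exact (integrable_map_measure ((hw.mul hf).aestronglyMeasurable)
        hφ.aemeasurable).mpr hint2
    have h4 : ∫ x, ∫ a, w x a * f x a ∂(κ x) ∂(Measure.map X P)
        = ∫ p : (Fin d → ℝ) × ℝ, w p.1 p.2 * Function.uncurry f p
            ∂((Measure.map X P).compProd κ) :=
      (Measure.integral_compProd hint2').symm
    have h5 : ∫ p : (Fin d → ℝ) × ℝ, w p.1 p.2 * Function.uncurry f p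
          ∂((Measure.map X P).compProd κ)
        = ∫ ω, w (X ω) (A ω) * f (X ω) (A ω) ∂P := by
      rw [← hκ]
      exact integral_map hφ.aemeasurable ((hw.mul hf).aestronglyMeasurable)
    rw [h1, hν, h2, integral_congr_ae h3, h4, h5]
  -- zero-mean of the debiasing term against the true regression
  have hm : MeasurableSpace.comap (fun ω => (X ω, A ω)) inferInstance
      ≤ ‹MeasurableSpace Ω› := hφ.comap_le
  have hgm : StronglyMeasurable[MeasurableSpace.comap (fun ω => (X ω, A ω)) inferInstance]
      (fun ω => what (X ω) (A ω)) :=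
    (hwhat.comp (comap_measurable _)).stronglyMeasurable
  have hgY_int : Integrable (fun ω => what (X ω) (A ω) * Y ω) P :=
    hYint.bdd_mul hwhatXA.aestronglyMeasurable
      (by filter_upwards [hCw] with ω hω; simpa [Real.norm_eq_abs] using hω)
  have hgμ_int : Integrable (fun ω => what (X ω) (A ω) * μ (X ω) (A ω)) P :=
    hμint.bdd_mul hwhatXA.aestronglyMeasurable
      (by filter_upwards [hCw] with ω hω; simpa [Real.norm_eq_abs] using hω)
  have hzero : ∫ ω, what (X ω) (A ω) * (Y ω - μ (X ω) (A ω)) ∂P = 0 := by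
    have hpull : P[(fun ω => what (X ω) (A ω)) * Y |
          MeasurableSpace.comap (fun ω => (X ω, A ω)) inferInstance]
        =ᵐ[P] (fun ω => what (X ω) (A ω)) *
          P[Y | MeasurableSpace.comap (fun ω => (X ω, A ω)) inferInstance] :=
      condExp_mul_of_stronglyMeasurable_left hgm hgY_int hYint
    have hIY : ∫ ω, what (X ω) (A ω) * Y ω ∂P
        = ∫ ω, what (X ω) (A ω) * μ (X ω) (A ω) ∂P := by
      have e1 : ∫ ω, what (X ω) (A ω) * Y ω ∂P
          = ∫ ω, (P[(fun ω => what (X ω) (A ω)) * Y |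
              MeasurableSpace.comap (fun ω => (X ω, A ω)) inferInstance]) ω ∂P :=
        (integral_condExp hm).symm
      rw [e1, integral_congr_ae hpull]
      refine integral_congr_ae ?_
      filter_upwards [hμver] with ω hω
      simp [Pi.mul_apply, ← hω]
    have hsub : (fun ω => what (X ω) (A ω) * (Y ω - μ (X ω) (A ω)))
        = fun ω => what (X ω) (A ω) * Y ω - what (X ω) (A ω) * μ (X ω) (A ω) := by
      funext ω; ring
    rw [hsub, integral_sub hgY_int hgμ_int, hIY, sub_self]
  -- change of measure applied to μ and μhat
  have hwμ_int : Integrable (fun ω => w (X ω) (A ω) * μ (X ω) (A ω)) P := by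
    refine hbdd_int _ (hwXA.mul hμXA) ⟨Cww * Cm, ?_⟩
    filter_upwards [hCww, hCm] with ω h1 h2
    calc |w (X ω) (A ω) * μ (X ω) (A ω)| = |w (X ω) (A ω)| * |μ (X ω) (A ω)| := abs_mul _ _
      _ ≤ Cww * Cm := mul_le_mul h1 h2 (abs_nonneg _) ((abs_nonneg _).trans h1)
  have hwμhat_int : Integrable (fun ω => w (X ω) (A ω) * μhat (X ω) (A ω)) P := by
    refine hbdd_int _ (hwXA.mul hμhatXA) ⟨Cww * Cmh, ?_⟩
    filter_upwards [hCww, hCmh] with ω h1 h2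
    calc |w (X ω) (A ω) * μhat (X ω) (A ω)|
        = |w (X ω) (A ω)| * |μhat (X ω) (A ω)| := abs_mul _ _
      _ ≤ Cww * Cmh := mul_le_mul h1 h2 (abs_nonneg _) ((abs_nonneg _).trans h1)
  have hψeq : ∫ ω', μ (X ω') (Atil ω') ∂P = ∫ ω, w (X ω) (A ω) * μ (X ω) (A ω) ∂P :=
    key μ hμ hμAtil_int hwμ_int
  have hψhateq : ∫ ω, μhat (X ω) (Atil ω) ∂P
      = ∫ ω, w (X ω) (A ω) * μhat (X ω) (A ω) ∂P :=
    key μhat hμhat hμhatAtil_int hwμhat_int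
  -- auxiliary integrability
  have hgYμ_int : Integrable (fun ω => what (X ω) (A ω) * (Y ω - μ (X ω) (A ω))) P := by
    have : (fun ω => what (X ω) (A ω) * (Y ω - μ (X ω) (A ω)))
        = fun ω => what (X ω) (A ω) * Y ω - what (X ω) (A ω) * μ (X ω) (A ω) := by
      funext ω; ring
    rw [this]; exact hgY_int.sub hgμ_int
  have hgμμhat_int : Integrable
      (fun ω => what (X ω) (A ω) * (μ (X ω) (A ω) - μhat (X ω) (A ω))) P :=
    (hμint.sub hμhatXA_int).bdd_mul hwhatXA.aestronglyMeasurable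
      (by filter_upwards [hCw] with ω hω; simpa [Real.norm_eq_abs] using hω)
  have hwμμhat_int : Integrable
      (fun ω => w (X ω) (A ω) * (μ (X ω) (A ω) - μhat (X ω) (A ω))) P := by
    have : (fun ω => w (X ω) (A ω) * (μ (X ω) (A ω) - μhat (X ω) (A ω)))
        = fun ω => w (X ω) (A ω) * μ (X ω) (A ω) - w (X ω) (A ω) * μhat (X ω) (A ω) := by
      funext ω; ring
    rw [this]; exact hwμ_int.sub hwμhat_int
  -- decompose the debiasing term
  have hdeb : ∫ ω, what (X ω) (A ω) * (Y ω - μhat (X ω) (A ω)) ∂P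
      = ∫ ω, what (X ω) (A ω) * (μ (X ω) (A ω) - μhat (X ω) (A ω)) ∂P := by
    have : (fun ω => what (X ω) (A ω) * (Y ω - μhat (X ω) (A ω)))
        = fun ω => what (X ω) (A ω) * (Y ω - μ (X ω) (A ω))
          + what (X ω) (A ω) * (μ (X ω) (A ω) - μhat (X ω) (A ω)) := by
      funext ω; ring
    rw [this, integral_add hgYμ_int hgμμhat_int, hzero, zero_add]
  -- total bias equals the product-error integral
  have hmain : ∫ ω, (what (X ω) (A ω) * (Y ω - μhat (X ω) (A ω)) + μhat (X ω) (Atil ω)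
        - ∫ ω', μ (X ω') (Atil ω') ∂P) ∂P
      = ∫ ω, (what (X ω) (A ω) - w (X ω) (A ω)) * (μ (X ω) (A ω) - μhat (X ω) (A ω)) ∂P := by
    have h6 : Integrable (fun ω =>
        what (X ω) (A ω) * (Y ω - μhat (X ω) (A ω)) + μhat (X ω) (Atil ω)) P :=
      hdeb_int.add hμhatAtil_int
    have h7 : Integrable (fun ω =>
        w (X ω) (A ω) * μhat (X ω) (A ω) - w (X ω) (A ω) * μ (X ω) (A ω)) P :=
      hwμhat_int.sub hwμ_int
    rw [integral_sub h6 (integrable_const _),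
      integral_add hdeb_int hμhatAtil_int, integral_const, probReal_univ,
      smul_eq_mul, one_mul, hdeb, hψhateq, hψeq,
      add_sub_assoc, ← integral_sub hwμhat_int hwμ_int, ← integral_add hgμμhat_int h7]
    refine integral_congr_ae (Filter.Eventually.of_forall fun ω => ?_)
    ring
  rw [hmain]
  have := norm_integral_le_of_norm_le_const (μ := P) (C := r₁ * r₂)
    (f := fun ω => (what (X ω) (A ω) - w (X ω) (A ω)) * (μ (X ω) (A ω) - μhat (X ω) (A ω)))
    (by
      filter_upwards [hr₁, hr₂] with ω h1 h2
      rw [Real.norm_eq_abs, abs_mul]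
      calc |what (X ω) (A ω) - w (X ω) (A ω)| * |μ (X ω) (A ω) - μhat (X ω) (A ω)|
          ≤ r₂ * r₁ := by
            refine mul_le_mul h2 ?_ (abs_nonneg _) hr₂0
            rwa [abs_sub_comm]
        _ = r₁ * r₂ := mul_comm _ _)
  simpa [Real.norm_eq_abs, measure_univ] using this
end

section
/- Let p(y|a,x), p(a|x), p̃(a|x), p(x) be nonnegative measurable functions on the appropriate Euclidean domains satisfying ∫ p(y|a,x) dy = 1 for all (a,x), ∫ p(a|x) da = 1 and ∫ p̃(a|x) da = 1 for all x, and ∫ p(x) dx = 1; write p(o) = p(y|a,x) p(a|x) p(x) and p̃(o) = p(y|a,x) p̃(a|x) p(x) for o = (y, a, x). Assume p(a|x) > 0 whenever p̃(a|x) > 0 and define w(x, a) = p̃(a|x)/p(a|x) (and 0 where p(a|x) = 0), and μ(x, a) = ∫ y p(y|a,x) dy. Let s₁(y,a,x), s₂(a,x), s₃(x) be measurable with ∫ s₁(y,a,x) p(y|a,x) dy = 0 for all (a,x), and assume all integrands below are integrable (so that Fubini's theorem applies). Then ∫ y s₁(y,a,x) p̃(o) do = ∫ w(x,a)(y − μ(x,a))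 (s₁(y,a,x) + s₂(a,x) + s₃(x)) p(o) do. -/
open MeasureTheory

/-- Key 1-D computation: if `∫ py = 1`, `∫ s₁ py = 0`, `μv = ∫ y py`, and the two displayed
integrands are integrable, then `∫ y s₁ py = ∫ (y - μv)(s₁ + c) py`. -/
lemma srf_inner (py s₁ : ℝ → ℝ) (c μv : ℝ)
    (hpy_one : ∫ y : ℝ, py y = 1)
    (hs0 : ∫ y : ℝ, s₁ y * py y = 0)
    (hμ : μv = ∫ y : ℝ, y * py y)
    (hA : Integrable (fun y => y * s₁ y * py y))
    (hB : Integrable (fun y => (y - μv) * (s₁ y + c) * py y)) :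
    (∫ y : ℝ, y * s₁ y * py y) = ∫ y : ℝ, (y - μv) * (s₁ y + c) * py y := by
  have hpy_int : Integrable py := by
    by_contra h
    exact one_ne_zero (hpy_one.symm.trans (integral_undef h))
  by_cases hμ0 : μv = 0
  · symm
    rw [← sub_eq_zero, ← integral_sub hB hA]
    have e : (fun y => (y - μv) * (s₁ y + c) * py y - y * s₁ y * py y)
        = fun y => c * (y * py y) := by
      funext y; rw [hμ0]; ring
    rw [e, integral_const_mul, ← hμ, hμ0, mul_zero]
  · have hypy_int : Integrable (fun y => y * py y) := by
      by_contra h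
      exact hμ0 (hμ.trans (integral_undef h))
    have h1 : Integrable (fun y => (y - μv) * c * py y) := by
      have e : (fun y => (y - μv) * c * py y)
          = fun y => c * (y * py y) + (-(c * μv)) * py y := by funext y; ring
      rw [e]; exact (hypy_int.const_mul c).add (hpy_int.const_mul _)
    have h2 : Integrable (fun y => (y - μv) * s₁ y * py y) := by
      have e : (fun y => (y - μv) * s₁ y * py y)
          = fun y => (y - μv) * (s₁ y + c) * py y - (y - μv) * c * py y := by
        funext y; ring
      rw [e]; exact hB.sub h1
    have hs1py : Integrable (fun y => s₁ y * py y) := by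
      have h3 : Integrable (fun y => μv * (s₁ y * py y)) := by
        have e : (fun y => μv * (s₁ y * py y))
            = fun y => y * s₁ y * py y - (y - μv) * s₁ y * py y := by funext y; ring
        rw [e]; exact hA.sub h2
      have h4 := h3.const_mul μv⁻¹
      refine h4.congr (Filter.Eventually.of_forall fun y => ?_)
      field_simp
    have e : (fun y => (y - μv) * (s₁ y + c) * py y)
        = fun y => y * s₁ y * py y
            + ((-μv) * (s₁ y * py y) + (c * (y * py y) + (-(c * μv)) * py y)) := by
      funext y; ring
    have hX2 : Integrable (fun y : ℝ => c * (y * py y) + (-(c * μv)) * py y) :=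
      (hypy_int.const_mul c).add (hpy_int.const_mul _)
    have hX : Integrable (fun y : ℝ => (-μv) * (s₁ y * py y)
        + (c * (y * py y) + (-(c * μv)) * py y)) :=
      (hs1py.const_mul _).add hX2
    have hz : ∫ y : ℝ, ((-μv) * (s₁ y * py y) + (c * (y * py y) + (-(c * μv)) * py y)) = 0 := by
      rw [integral_add (hs1py.const_mul _) hX2,
          integral_add (hypy_int.const_mul c) (hpy_int.const_mul _),
          integral_const_mul, integral_const_mul, integral_const_mul, hs0, hpy_one, ← hμ]
      ring
    rw [e, integral_add hA hX, hz, add_zero]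

/-- First-term computation in the pathwise-differentiability proof of Proposition 1: `∫ y s₁ p̃ = ∫ w (y − μ) (s₁ + s₂ + s₃) p`. -/
theorem srf_eif_first_term
    {d : ℕ}
    -- the densities p(y|a,x), p(a|x), p̃(a|x), p(x)
    (py : ℝ → ℝ → (Fin d → ℝ) → ℝ) (pa pta : ℝ → (Fin d → ℝ) → ℝ)
    (px : (Fin d → ℝ) → ℝ)
    (hpy_meas : Measurable (fun o : ℝ × ℝ × (Fin d → ℝ) => py o.1 o.2.1 o.2.2))
    (hpa_meas : Measurable (fun q : ℝ × (Fin d → ℝ) => pa q.1 q.2))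
    (hpta_meas : Measurable (fun q : ℝ × (Fin d → ℝ) => pta q.1 q.2))
    (hpx_meas : Measurable px)
    (hpy_nn : ∀ y a x, 0 ≤ py y a x) (hpa_nn : ∀ a x, 0 ≤ pa a x)
    (hpta_nn : ∀ a x, 0 ≤ pta a x) (hpx_nn : ∀ x, 0 ≤ px x)
    -- normalization
    (hpy_one : ∀ a x, ∫ y : ℝ, py y a x = 1)
    (hpa_one : ∀ x, ∫ a : ℝ, pa a x = 1)
    (hpta_one : ∀ x, ∫ a : ℝ, pta a x = 1)
    (hpx_one : ∫ x : Fin d → ℝ, px x = 1)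
    -- positivity: p(a|x) > 0 whenever p̃(a|x) > 0
    (hpos : ∀ a x, 0 < pta a x → 0 < pa a x)
    -- the density ratio w(x, a) = p̃(a|x)/p(a|x) (and 0 where p(a|x) = 0)
    (w : (Fin d → ℝ) → ℝ → ℝ)
    (hw_def : ∀ x a, w x a = if pa a x = 0 then 0 else pta a x / pa a x)
    -- the outcome regression μ(x, a) = ∫ y p(y|a,x) dy
    (μ : (Fin d → ℝ) → ℝ → ℝ) (hμ_def : ∀ x a, μ x a = ∫ y : ℝ, y * py y a x)
    -- the score components
    (s₁ : ℝ → ℝ → (Fin d → ℝ) → ℝ) (s₂ : ℝ → (Fin d → ℝ) → ℝ)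
    (s₃ : (Fin d → ℝ) → ℝ)
    (hs₁_meas : Measurable (fun o : ℝ × ℝ × (Fin d → ℝ) => s₁ o.1 o.2.1 o.2.2))
    (hs₂_meas : Measurable (fun q : ℝ × (Fin d → ℝ) => s₂ q.1 q.2))
    (hs₃_meas : Measurable s₃)
    (hs₁_zero : ∀ a x, ∫ y : ℝ, s₁ y a x * py y a x = 0)
    -- integrability of the displayed integrands
    (_ : Integrable (fun o : ℝ × ℝ × (Fin d → ℝ) =>
      o.1 * s₁ o.1 o.2.1 o.2.2 * (py o.1 o.2.1 o.2.2 * pta o.2.1 o.2.2 * px o.2.2)) (volume : Measure (ℝ × ℝ × (Fin d → ℝ))))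
    (_ : Integrable (fun o : ℝ × ℝ × (Fin d → ℝ) =>
      w o.2.2 o.2.1 * (o.1 - μ o.2.2 o.2.1) * (s₁ o.1 o.2.1 o.2.2 + s₂ o.2.1 o.2.2 + s₃ o.2.2) * (py o.1 o.2.1 o.2.2 * pa o.2.1 o.2.2 * px o.2.2)) (volume : Measure (ℝ × ℝ × (Fin d → ℝ))))
    :
    (∫ o : ℝ × ℝ × (Fin d → ℝ),
        o.1 * s₁ o.1 o.2.1 o.2.2 * (py o.1 o.2.1 o.2.2 * pta o.2.1 o.2.2 * px o.2.2))
      = ∫ o : ℝ × ℝ × (Fin d → ℝ),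
        w o.2.2 o.2.1 * (o.1 - μ o.2.2 o.2.1) * (s₁ o.1 o.2.1 o.2.2 + s₂ o.2.1 o.2.2 + s₃ o.2.2) * (py o.1 o.2.1 o.2.2 * pa o.2.1 o.2.2 * px o.2.2) := by
  rename_i h1 h2
  -- `w · pa = pta` pointwise
  have hwpa : ∀ a x, w x a * pa a x = pta a x := by
    intro a x
    rw [hw_def]
    by_cases h : pa a x = 0
    · have hpta0 : pta a x = 0 :=
        le_antisymm (not_lt.mp fun hlt => (hpos a x hlt).ne' h) (hpta_nn a x)
      simp [h, hpta0]
    · simp only [h, if_false]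
      field_simp
  -- rewrite the RHS integrand pointwise
  have hcong : (fun o : ℝ × ℝ × (Fin d → ℝ) =>
      w o.2.2 o.2.1 * (o.1 - μ o.2.2 o.2.1) * (s₁ o.1 o.2.1 o.2.2 + s₂ o.2.1 o.2.2 + s₃ o.2.2)
        * (py o.1 o.2.1 o.2.2 * pa o.2.1 o.2.2 * px o.2.2))
      = fun o : ℝ × ℝ × (Fin d → ℝ) =>
      (o.1 - μ o.2.2 o.2.1) * (s₁ o.1 o.2.1 o.2.2 + s₂ o.2.1 o.2.2 + s₃ o.2.2)
        * (py o.1 o.2.1 o.2.2 * pta o.2.1 o.2.2 * px o.2.2) := by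
    funext o
    have h := hwpa o.2.1 o.2.2
    linear_combination ((o.1 - μ o.2.2 o.2.1) * (s₁ o.1 o.2.1 o.2.2 + s₂ o.2.1 o.2.2 + s₃ o.2.2)
      * (py o.1 o.2.1 o.2.2 * px o.2.2)) * h
  rw [hcong] at h2 ⊢
  rw [Measure.volume_eq_prod] at h1 h2 ⊢
  rw [integral_prod_symm _ h1, integral_prod_symm _ h2]
  apply integral_congr_ae
  filter_upwards [h1.prod_left_ae, h2.prod_left_ae] with q hA hB
  by_cases hT : pta q.1 q.2 * px q.2 = 0
  · have e1 : (fun y : ℝ => y * s₁ y q.1 q.2 * (py y q.1 q.2 * pta q.1 q.2 * px q.2))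
        = fun _ : ℝ => (0 : ℝ) := by
      funext y
      have : py y q.1 q.2 * pta q.1 q.2 * px q.2
          = py y q.1 q.2 * (pta q.1 q.2 * px q.2) := by ring
      rw [this, hT]; ring
    have e2 : (fun y : ℝ => (y - μ q.2 q.1) * (s₁ y q.1 q.2 + s₂ q.1 q.2 + s₃ q.2)
        * (py y q.1 q.2 * pta q.1 q.2 * px q.2)) = fun _ : ℝ => (0 : ℝ) := by
      funext y
      have : py y q.1 q.2 * pta q.1 q.2 * px q.2
          = py y q.1 q.2 * (pta q.1 q.2 * px q.2) := by ring
      rw [this, hT]; ring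
    rw [e1, e2]
  · set T : ℝ := pta q.1 q.2 * px q.2 with hTdef
    have e1 : (fun y : ℝ => y * s₁ y q.1 q.2 * (py y q.1 q.2 * pta q.1 q.2 * px q.2))
        = fun y : ℝ => y * s₁ y q.1 q.2 * py y q.1 q.2 * T := by funext y; rw [hTdef]; ring
    have e2 : (fun y : ℝ => (y - μ q.2 q.1) * (s₁ y q.1 q.2 + s₂ q.1 q.2 + s₃ q.2)
          * (py y q.1 q.2 * pta q.1 q.2 * px q.2))
        = fun y : ℝ => (y - μ q.2 q.1) * (s₁ y q.1 q.2 + (s₂ q.1 q.2 + s₃ q.2))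
          * py y q.1 q.2 * T := by funext y; rw [hTdef]; ring
    have hA' : Integrable (fun y : ℝ => y * s₁ y q.1 q.2 * py y q.1 q.2) := by
      have h := (e1 ▸ hA).const_mul T⁻¹
      refine h.congr (Filter.Eventually.of_forall fun y => ?_)
      field_simp
    have hB' : Integrable (fun y : ℝ => (y - μ q.2 q.1)
        * (s₁ y q.1 q.2 + (s₂ q.1 q.2 + s₃ q.2)) * py y q.1 q.2) := by
      have h := (e2 ▸ hB).const_mul T⁻¹
      refine h.congr (Filter.Eventually.of_forall fun y => ?_)
      field_simp
    rw [e1, e2, integral_mul_const, integral_mul_const]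
    congr 1
    exact srf_inner (fun y => py y q.1 q.2) (fun y => s₁ y q.1 q.2)
      (s₂ q.1 q.2 + s₃ q.2) (μ q.2 q.1)
      (hpy_one q.1 q.2) (hs₁_zero q.1 q.2) (hμ_def q.2 q.1) hA' hB'
end

section
/- Let p(y|a,x), p(a|x), p̃(a|x), p(x) be nonnegative measurable functions on the appropriate Euclidean domains satisfying ∫ p(y|a,x) dy = 1 for all (a,x), ∫ p(a|x) da = 1 and ∫ p̃(a|x) da = 1 for all x, and ∫ p(x) dx = 1; write p̃(o) = p(y|a,x) p̃(a|x) p(x) for o = (y, a, x), and define μ(x, a) = ∫ y p(y|a,x) dy and m(x) = ∫ μ(x,a) p̃(a|x) da. Let s₁(y,a,x), s₂(a,x), s₃(x) be measurable with ∫ s₁(y,a,x) p(y|a,x) dy = 0 for all (a,x) and ∫ s₂(a,x) p̃(a|x) da = 0 for all x, and assume all integrands below are integrable (so that Fubini's theorem applies). Then ∫ y s₂(a,x) p̃(o) do = ∫ (μ(x,a) − m(x)) (s₁(y,a,x) + s₂(a,x) + s₃(x)) p̃(o) do. -/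
open MeasureTheory

/-- Second-term computation in the pathwise-differentiability proof of Proposition 1: `∫ y s₂ p̃ = ∫ (μ − m) (s₁ + s₂ + s₃) p̃`. -/
theorem srf_eif_second_term
    {d : ℕ}
    -- the densities p(y|a,x), p(a|x), p̃(a|x), p(x)
    (py : ℝ → ℝ → (Fin d → ℝ) → ℝ) (pa pta : ℝ → (Fin d → ℝ) → ℝ)
    (px : (Fin d → ℝ) → ℝ)
    (hpy_meas : Measurable (fun o : ℝ × ℝ × (Fin d → ℝ) => py o.1 o.2.1 o.2.2))
    (hpa_meas : Measurable (fun q : ℝ × (Fin d → ℝ) => pa q.1 q.2))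
    (hpta_meas : Measurable (fun q : ℝ × (Fin d → ℝ) => pta q.1 q.2))
    (hpx_meas : Measurable px)
    (hpy_nn : ∀ y a x, 0 ≤ py y a x) (hpa_nn : ∀ a x, 0 ≤ pa a x)
    (hpta_nn : ∀ a x, 0 ≤ pta a x) (hpx_nn : ∀ x, 0 ≤ px x)
    -- normalization
    (hpy_one : ∀ a x, ∫ y : ℝ, py y a x = 1)
    (hpa_one : ∀ x, ∫ a : ℝ, pa a x = 1)
    (hpta_one : ∀ x, ∫ a : ℝ, pta a x = 1)
    (hpx_one : ∫ x : Fin d → ℝ, px x = 1)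
    -- the outcome regression μ(x, a) = ∫ y p(y|a,x) dy
    (μ : (Fin d → ℝ) → ℝ → ℝ) (hμ_def : ∀ x a, μ x a = ∫ y : ℝ, y * py y a x)
    -- m(x) = ∫ μ(x,a) p̃(a|x) da
    (m : (Fin d → ℝ) → ℝ) (hm_def : ∀ x, m x = ∫ a : ℝ, μ x a * pta a x)
    -- the score components
    (s₁ : ℝ → ℝ → (Fin d → ℝ) → ℝ) (s₂ : ℝ → (Fin d → ℝ) → ℝ)
    (s₃ : (Fin d → ℝ) → ℝ)
    (hs₁_meas : Measurable (fun o : ℝ × ℝ × (Fin d → ℝ) => s₁ o.1 o.2.1 o.2.2))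
    (hs₂_meas : Measurable (fun q : ℝ × (Fin d → ℝ) => s₂ q.1 q.2))
    (hs₃_meas : Measurable s₃)
    (hs₁_zero : ∀ a x, ∫ y : ℝ, s₁ y a x * py y a x = 0)
    (hs₂_zero : ∀ x, ∫ a : ℝ, s₂ a x * pta a x = 0)
    -- integrability of the displayed integrands
    (_ : Integrable (fun o : ℝ × ℝ × (Fin d → ℝ) =>
      o.1 * s₂ o.2.1 o.2.2 * (py o.1 o.2.1 o.2.2 * pta o.2.1 o.2.2 * px o.2.2)) (volume : Measure (ℝ × ℝ × (Fin d → ℝ))))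
    (_ : Integrable (fun o : ℝ × ℝ × (Fin d → ℝ) =>
      (μ o.2.2 o.2.1 - m o.2.2) * (s₁ o.1 o.2.1 o.2.2 + s₂ o.2.1 o.2.2 + s₃ o.2.2) * (py o.1 o.2.1 o.2.2 * pta o.2.1 o.2.2 * px o.2.2)) (volume : Measure (ℝ × ℝ × (Fin d → ℝ))))
    :
    (∫ o : ℝ × ℝ × (Fin d → ℝ),
        o.1 * s₂ o.2.1 o.2.2 * (py o.1 o.2.1 o.2.2 * pta o.2.1 o.2.2 * px o.2.2))
      = ∫ o : ℝ × ℝ × (Fin d → ℝ),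
        (μ o.2.2 o.2.1 - m o.2.2) * (s₁ o.1 o.2.1 o.2.2 + s₂ o.2.1 o.2.2 + s₃ o.2.2) * (py o.1 o.2.1 o.2.2 * pta o.2.1 o.2.2 * px o.2.2) := by
  rename_i hInt1 hInt2
  have hpy_int : ∀ a x, Integrable (fun y => py y a x) := by
    intro a x
    by_contra hc
    have h := hpy_one a x
    rw [integral_undef hc] at h
    norm_num at h
  have hpta_int : ∀ x, Integrable (fun a => pta a x) := by
    intro x
    by_contra hc
    have h := hpta_one x
    rw [integral_undef hc] at h
    norm_num at h
  set gL : ℝ × (Fin d → ℝ) → ℝ :=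
    fun q => s₂ q.1 q.2 * pta q.1 q.2 * px q.2 * μ q.2 q.1 with hgL_def
  set gR : ℝ × (Fin d → ℝ) → ℝ :=
    fun q => (μ q.2 q.1 - m q.2) * (s₂ q.1 q.2 + s₃ q.2) * (pta q.1 q.2 * px q.2) with hgR_def
  rw [Measure.volume_eq_prod ℝ (ℝ × (Fin d → ℝ))] at hInt1 hInt2
  -- inner integral over y, left-hand side (unconditional)
  have hLin : ∀ q : ℝ × (Fin d → ℝ),
      (∫ y : ℝ, y * s₂ q.1 q.2 * (py y q.1 q.2 * pta q.1 q.2 * px q.2)) = gL q := by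
    intro q
    have h : (fun y : ℝ => y * s₂ q.1 q.2 * (py y q.1 q.2 * pta q.1 q.2 * px q.2))
        = fun y => (s₂ q.1 q.2 * pta q.1 q.2 * px q.2) * (y * py y q.1 q.2) := by
      funext y; ring
    rw [h, integral_const_mul, ← hμ_def]
  -- inner integral over y, right-hand side (a.e. q)
  have hRae : ∀ᵐ q : ℝ × (Fin d → ℝ),
      (∫ y : ℝ, (μ q.2 q.1 - m q.2) * (s₁ y q.1 q.2 + s₂ q.1 q.2 + s₃ q.2)
        * (py y q.1 q.2 * pta q.1 q.2 * px q.2)) = gR q := by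
    filter_upwards [hInt2.prod_left_ae] with q hq
    have heq : (fun y : ℝ => (μ q.2 q.1 - m q.2) * (s₁ y q.1 q.2 + s₂ q.1 q.2 + s₃ q.2)
        * (py y q.1 q.2 * pta q.1 q.2 * px q.2))
        = fun y => ((μ q.2 q.1 - m q.2) * (pta q.1 q.2 * px q.2)) * (s₁ y q.1 q.2 * py y q.1 q.2)
          + gR q * py y q.1 q.2 := by
      funext y; simp only [hgR_def]; ring
    have hq' : Integrable (fun y : ℝ =>
        ((μ q.2 q.1 - m q.2) * (pta q.1 q.2 * px q.2)) * (s₁ y q.1 q.2 * py y q.1 q.2)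
          + gR q * py y q.1 q.2) := by
      apply hq.congr
      exact Filter.Eventually.of_forall fun y => congrFun heq y
    have hB : Integrable (fun y : ℝ => gR q * py y q.1 q.2) :=
      (hpy_int q.1 q.2).const_mul _
    have hA : Integrable (fun y : ℝ =>
        ((μ q.2 q.1 - m q.2) * (pta q.1 q.2 * px q.2)) * (s₁ y q.1 q.2 * py y q.1 q.2)) := by
      apply (hq'.sub hB).congr
      refine Filter.Eventually.of_forall fun y => ?_
      simp only [Pi.sub_apply]
      ring
    calc (∫ y : ℝ, (μ q.2 q.1 - m q.2) * (s₁ y q.1 q.2 + s₂ q.1 q.2 + s₃ q.2)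
        * (py y q.1 q.2 * pta q.1 q.2 * px q.2))
        = ∫ y : ℝ, (((μ q.2 q.1 - m q.2) * (pta q.1 q.2 * px q.2)) * (s₁ y q.1 q.2 * py y q.1 q.2)
          + gR q * py y q.1 q.2) := by rw [heq]
      _ = ((μ q.2 q.1 - m q.2) * (pta q.1 q.2 * px q.2)) * (∫ y : ℝ, s₁ y q.1 q.2 * py y q.1 q.2)
          + gR q * (∫ y : ℝ, py y q.1 q.2) := by
            rw [integral_add hA hB, integral_const_mul, integral_const_mul]
      _ = gR q := by rw [hs₁_zero, hpy_one, mul_zero, mul_one, zero_add]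
  -- marginal integrability over q
  have hgL_int : Integrable gL := by
    apply hInt1.integral_prod_right.congr
    exact Filter.Eventually.of_forall hLin
  have hgR_int : Integrable gR := hInt2.integral_prod_right.congr hRae
  rw [Measure.volume_eq_prod ℝ (ℝ × (Fin d → ℝ)),
    integral_prod_symm _ hInt1, integral_prod_symm _ hInt2]
  calc (∫ q : ℝ × (Fin d → ℝ), ∫ y : ℝ,
        y * s₂ q.1 q.2 * (py y q.1 q.2 * pta q.1 q.2 * px q.2))
      = ∫ q : ℝ × (Fin d → ℝ), gL q := integral_congr_ae (Filter.Eventually.of_forall hLin)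
    _ = ∫ q : ℝ × (Fin d → ℝ), gR q := by
        rw [Measure.volume_eq_prod ℝ (Fin d → ℝ)] at hgL_int hgR_int ⊢
        rw [integral_prod_symm _ hgL_int, integral_prod_symm _ hgR_int]
        apply integral_congr_ae
        filter_upwards [hgL_int.prod_left_ae, hgR_int.prod_left_ae] with x hLx hRx
        simp only [hgL_def, hgR_def] at hLx hRx ⊢
        by_cases hpx0 : px x = 0
        · simp [hpx0]
        · have hu : Integrable (fun a => μ x a * (s₂ a x * pta a x)) := by
            apply (hLx.const_mul (px x)⁻¹).congr
            refine Filter.Eventually.of_forall fun a => ?_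
            field_simp
          have hv : Integrable (fun a => (μ x a - m x) * (s₂ a x + s₃ x) * pta a x) := by
            apply (hRx.const_mul (px x)⁻¹).congr
            refine Filter.Eventually.of_forall fun a => ?_
            field_simp
          have hw : Integrable (fun a =>
              s₃ x * (μ x a * pta a x) - m x * (s₂ a x * pta a x) - m x * s₃ x * pta a x) := by
            apply (hv.sub hu).congr
            refine Filter.Eventually.of_forall fun a => ?_
            simp only [Pi.sub_apply]
            ring
          have hw' : Integrable (fun a =>
              s₃ x * (μ x a * pta a x) - m x * (s₂ a x * pta a x)) := by
            apply (hw.add ((hpta_int x).const_mul (m x * s₃ x))).congr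
            refine Filter.Eventually.of_forall fun a => ?_
            simp only [Pi.add_apply]
            ring
          have hkey : (∫ a : ℝ, (s₃ x * (μ x a * pta a x) - m x * (s₂ a x * pta a x)))
              = s₃ x * m x := by
            by_cases hμint : Integrable (fun a => μ x a * pta a x)
            · have h1 : Integrable (fun a => s₃ x * (μ x a * pta a x)) := hμint.const_mul _
              have h2 : Integrable (fun a => m x * (s₂ a x * pta a x)) := by
                apply (h1.sub hw').congr
                refine Filter.Eventually.of_forall fun a => ?_
                simp only [Pi.sub_apply]
                ring
              rw [integral_sub h1 h2, integral_const_mul, integral_const_mul, ← hm_def,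
                hs₂_zero, mul_zero, sub_zero]
            · have hm0 : m x = 0 := by rw [hm_def]; exact integral_undef hμint
              by_cases hs3 : s₃ x = 0
              · simp [hm0, hs3]
              · exfalso
                apply hμint
                simp only [hm0, zero_mul, sub_zero] at hw'
                apply (hw'.const_mul (s₃ x)⁻¹).congr
                refine Filter.Eventually.of_forall fun a => ?_
                field_simp
          have hL' : (fun a => s₂ a x * pta a x * px x * μ x a)
              = fun a => px x * (μ x a * (s₂ a x * pta a x)) := by
            funext a; ring
          have hR' : (fun a => (μ x a - m x) * (s₂ a x + s₃ x) * (pta a x * px x))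
              = fun a => px x * ((μ x a - m x) * (s₂ a x + s₃ x) * pta a x) := by
            funext a; ring
          rw [hL', hR', integral_const_mul, integral_const_mul]
          congr 1
          have hsplit : (fun a => (μ x a - m x) * (s₂ a x + s₃ x) * pta a x)
              = fun a => μ x a * (s₂ a x * pta a x)
                + (s₃ x * (μ x a * pta a x) - m x * (s₂ a x * pta a x)
                  - m x * s₃ x * pta a x) := by
            funext a; ring
          rw [hsplit, integral_add hu hw,
            integral_sub hw' ((hpta_int x).const_mul (m x * s₃ x)), hkey,
            integral_const_mul, hpta_one]
          ring
    _ = ∫ q : ℝ × (Fin d → ℝ), ∫ y : ℝ,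
          (μ q.2 q.1 - m q.2) * (s₁ y q.1 q.2 + s₂ q.1 q.2 + s₃ q.2)
            * (py y q.1 q.2 * pta q.1 q.2 * px q.2) := (integral_congr_ae hRae).symm
end

section
/- Let p(y|a,x), p(a|x), p̃(a|x), p(x) be nonnegative measurable functions on the appropriate Euclidean domains satisfying ∫ p(y|a,x) dy = 1 for all (a,x), ∫ p(a|x) da = 1 and ∫ p̃(a|x) da = 1 for all x, and ∫ p(x) dx = 1; write p̃(o) = p(y|a,x) p̃(a|x) p(x) for o = (y, a, x), and define μ(x, a) = ∫ y p(y|a,x) dy, m(x) = ∫ μ(x,a) p̃(a|x) da, and ψ = ∫ y p̃(o) do. Let s₁(y,a,x), s₂(a,x), s₃(x) be measurable with ∫ s₁(y,a,x) p(y|a,x) dy = 0 for all (a,x), ∫ s₂(a,x) p̃(a|x) da = 0 for all x, and ∫ s₃(x) p(x) dx = 0, and assume all integrands below are integrable (so that Fubini's theorem applies). Then ∫ y s₃(x) p̃(o) do = ∫ (m(x) − ψ) (s₁(y,a,x) + s₂(a,x) + s₃(x)) p̃(o) do. -/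
open MeasureTheory

/-- Third-term computation in the pathwise-differentiability proof of Proposition 1: `∫ y s₃ p̃ = ∫ (m − ψ) (s₁ + s₂ + s₃) p̃`. -/
theorem srf_eif_third_term
    {d : ℕ}
    -- the densities p(y|a,x), p(a|x), p̃(a|x), p(x)
    (py : ℝ → ℝ → (Fin d → ℝ) → ℝ) (pa pta : ℝ → (Fin d → ℝ) → ℝ)
    (px : (Fin d → ℝ) → ℝ)
    (hpy_meas : Measurable (fun o : ℝ × ℝ × (Fin d → ℝ) => py o.1 o.2.1 o.2.2))
    (hpa_meas : Measurable (fun q : ℝ × (Fin d → ℝ) => pa q.1 q.2))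
    (hpta_meas : Measurable (fun q : ℝ × (Fin d → ℝ) => pta q.1 q.2))
    (hpx_meas : Measurable px)
    (hpy_nn : ∀ y a x, 0 ≤ py y a x) (hpa_nn : ∀ a x, 0 ≤ pa a x)
    (hpta_nn : ∀ a x, 0 ≤ pta a x) (hpx_nn : ∀ x, 0 ≤ px x)
    -- normalization
    (hpy_one : ∀ a x, ∫ y : ℝ, py y a x = 1)
    (hpa_one : ∀ x, ∫ a : ℝ, pa a x = 1)
    (hpta_one : ∀ x, ∫ a : ℝ, pta a x = 1)
    (hpx_one : ∫ x : Fin d → ℝ, px x = 1)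
    -- the outcome regression μ(x, a) = ∫ y p(y|a,x) dy
    (μ : (Fin d → ℝ) → ℝ → ℝ) (hμ_def : ∀ x a, μ x a = ∫ y : ℝ, y * py y a x)
    -- m(x) = ∫ μ(x,a) p̃(a|x) da
    (m : (Fin d → ℝ) → ℝ) (hm_def : ∀ x, m x = ∫ a : ℝ, μ x a * pta a x)
    -- ψ = ∫ y p̃(o) do
    (ψ : ℝ)
    (hψ_def : ψ = ∫ o : ℝ × ℝ × (Fin d → ℝ),
      o.1 * (py o.1 o.2.1 o.2.2 * pta o.2.1 o.2.2 * px o.2.2))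
    -- the score components
    (s₁ : ℝ → ℝ → (Fin d → ℝ) → ℝ) (s₂ : ℝ → (Fin d → ℝ) → ℝ)
    (s₃ : (Fin d → ℝ) → ℝ)
    (hs₁_meas : Measurable (fun o : ℝ × ℝ × (Fin d → ℝ) => s₁ o.1 o.2.1 o.2.2))
    (hs₂_meas : Measurable (fun q : ℝ × (Fin d → ℝ) => s₂ q.1 q.2))
    (hs₃_meas : Measurable s₃)
    (hs₁_zero : ∀ a x, ∫ y : ℝ, s₁ y a x * py y a x = 0)
    (hs₂_zero : ∀ x, ∫ a : ℝ, s₂ a x * pta a x = 0)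
    (hs₃_zero : ∫ x : Fin d → ℝ, s₃ x * px x = 0)
    -- integrability of the displayed integrands
    (_ : Integrable (fun o : ℝ × ℝ × (Fin d → ℝ) =>
      o.1 * s₃ o.2.2 * (py o.1 o.2.1 o.2.2 * pta o.2.1 o.2.2 * px o.2.2)) (volume : Measure (ℝ × ℝ × (Fin d → ℝ))))
    (_ : Integrable (fun o : ℝ × ℝ × (Fin d → ℝ) =>
      (m o.2.2 - ψ) * (s₁ o.1 o.2.1 o.2.2 + s₂ o.2.1 o.2.2 + s₃ o.2.2) * (py o.1 o.2.1 o.2.2 * pta o.2.1 o.2.2 * px o.2.2)) (volume : Measure (ℝ × ℝ × (Fin d → ℝ))))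
    :
    (∫ o : ℝ × ℝ × (Fin d → ℝ),
        o.1 * s₃ o.2.2 * (py o.1 o.2.1 o.2.2 * pta o.2.1 o.2.2 * px o.2.2))
      = ∫ o : ℝ × ℝ × (Fin d → ℝ),
        (m o.2.2 - ψ) * (s₁ o.1 o.2.1 o.2.2 + s₂ o.2.1 o.2.2 + s₃ o.2.2) * (py o.1 o.2.1 o.2.2 * pta o.2.1 o.2.2 * px o.2.2) := by
  rename_i hInt1 hInt2
  have hpy_int : ∀ a x, Integrable (fun y : ℝ => py y a x) := by
    intro a x
    by_contra h
    have h0 : (∫ y : ℝ, py y a x) = 0 := integral_undef h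
    rw [hpy_one a x] at h0
    exact one_ne_zero h0
  have hpta_int : ∀ x, Integrable (fun a : ℝ => pta a x) := by
    intro x
    by_contra h
    have h0 : (∫ a : ℝ, pta a x) = 0 := integral_undef h
    rw [hpta_one x] at h0
    exact one_ne_zero h0
  rw [Measure.volume_eq_prod _ _] at hInt1 hInt2
  -- LHS computation
  have hL2 : ∀ q : ℝ × (Fin d → ℝ),
      (∫ y : ℝ, y * s₃ q.2 * (py y q.1 q.2 * pta q.1 q.2 * px q.2))
        = (s₃ q.2 * pta q.1 q.2 * px q.2) * μ q.2 q.1 := by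
    intro q
    have he : (fun y : ℝ => y * s₃ q.2 * (py y q.1 q.2 * pta q.1 q.2 * px q.2))
        = fun y => (s₃ q.2 * pta q.1 q.2 * px q.2) * (y * py y q.1 q.2) := by
      funext y; ring
    rw [he, integral_const_mul _ _, hμ_def]
  have hG1_int : Integrable (fun q : ℝ × (Fin d → ℝ) =>
      (s₃ q.2 * pta q.1 q.2 * px q.2) * μ q.2 q.1) :=
    hInt1.integral_prod_right.congr (Filter.Eventually.of_forall hL2)
  rw [Measure.volume_eq_prod _ _] at hG1_int
  have hL4 : ∀ x, (∫ a : ℝ, (s₃ x * pta a x * px x) * μ x a) = (s₃ x * px x) * m x := by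
    intro x
    have he : (fun a : ℝ => (s₃ x * pta a x * px x) * μ x a)
        = fun a => (s₃ x * px x) * (μ x a * pta a x) := by funext a; ring
    rw [he, integral_const_mul _ _, hm_def]
  have hL_int : Integrable (fun x : Fin d → ℝ => (s₃ x * px x) * m x) :=
    hG1_int.integral_prod_right.congr (Filter.Eventually.of_forall hL4)
  have hLHS : (∫ o : ℝ × ℝ × (Fin d → ℝ),
        o.1 * s₃ o.2.2 * (py o.1 o.2.1 o.2.2 * pta o.2.1 o.2.2 * px o.2.2))
      = ∫ x : Fin d → ℝ, (s₃ x * px x) * m x := by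
    rw [Measure.volume_eq_prod _ _, integral_prod_symm _ hInt1]
    have : (∫ q : ℝ × (Fin d → ℝ),
        ∫ y : ℝ, y * s₃ q.2 * (py y q.1 q.2 * pta q.1 q.2 * px q.2))
        = ∫ q : ℝ × (Fin d → ℝ), (s₃ q.2 * pta q.1 q.2 * px q.2) * μ q.2 q.1 :=
      integral_congr_ae (Filter.Eventually.of_forall hL2)
    rw [this, Measure.volume_eq_prod _ _, integral_prod_symm _ hG1_int]
    exact integral_congr_ae (Filter.Eventually.of_forall fun x => hL4 x)
  -- RHS computation
  have hR2 : ∀ᵐ q : ℝ × (Fin d → ℝ) ∂(volume : Measure (ℝ × (Fin d → ℝ))),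
      (∫ y : ℝ, (m q.2 - ψ) * (s₁ y q.1 q.2 + s₂ q.1 q.2 + s₃ q.2)
          * (py y q.1 q.2 * pta q.1 q.2 * px q.2))
        = ((m q.2 - ψ) * (pta q.1 q.2 * px q.2)) * (s₂ q.1 q.2 + s₃ q.2) := by
    filter_upwards [hInt2.prod_left_ae] with q hq
    set C := (m q.2 - ψ) * (pta q.1 q.2 * px q.2) with hCdef
    set c := s₂ q.1 q.2 + s₃ q.2 with hcdef
    have he : (fun y : ℝ => (m q.2 - ψ) * (s₁ y q.1 q.2 + s₂ q.1 q.2 + s₃ q.2)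
          * (py y q.1 q.2 * pta q.1 q.2 * px q.2))
        = fun y => C * ((s₁ y q.1 q.2 + c) * py y q.1 q.2) := by
      funext y; rw [hCdef, hcdef]; ring
    rw [he] at hq ⊢
    rw [integral_const_mul _ _]
    by_cases hC0 : C = 0
    · rw [hC0, zero_mul, zero_mul]
    · congr 1
      have hg : Integrable (fun y : ℝ => (s₁ y q.1 q.2 + c) * py y q.1 q.2) := by
        exact (hq.const_mul C⁻¹).congr
          (Filter.Eventually.of_forall fun y => inv_mul_cancel_left₀ hC0 _)
      have hcpy : Integrable (fun y : ℝ => c * py y q.1 q.2) :=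
        (hpy_int q.1 q.2).const_mul c
      have hs1py : Integrable (fun y : ℝ => s₁ y q.1 q.2 * py y q.1 q.2) := by
        refine (hg.sub hcpy).congr (Filter.Eventually.of_forall fun y => ?_)
        simp only [Pi.sub_apply]; ring
      have he2 : (fun y : ℝ => (s₁ y q.1 q.2 + c) * py y q.1 q.2)
          = fun y => s₁ y q.1 q.2 * py y q.1 q.2 + c * py y q.1 q.2 := by
        funext y; ring
      rw [he2, integral_add hs1py hcpy, hs₁_zero, integral_const_mul _ _, hpy_one]
      ring
  have hG_int : Integrable (fun q : ℝ × (Fin d → ℝ) =>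
      ((m q.2 - ψ) * (pta q.1 q.2 * px q.2)) * (s₂ q.1 q.2 + s₃ q.2)) :=
    hInt2.integral_prod_right.congr hR2
  rw [Measure.volume_eq_prod _ _] at hG_int
  have hR5 : ∀ᵐ x : Fin d → ℝ ∂(volume : Measure (Fin d → ℝ)),
      (∫ a : ℝ, ((m x - ψ) * (pta a x * px x)) * (s₂ a x + s₃ x))
        = (m x - ψ) * s₃ x * px x := by
    filter_upwards [hG_int.prod_left_ae] with x hx
    set D := (m x - ψ) * px x with hDdef
    have he : (fun a : ℝ => ((m x - ψ) * (pta a x * px x)) * (s₂ a x + s₃ x))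
        = fun a => D * ((s₂ a x + s₃ x) * pta a x) := by
      funext a; rw [hDdef]; ring
    rw [he] at hx ⊢
    rw [integral_const_mul _ _]
    have htarget : (m x - ψ) * s₃ x * px x = D * s₃ x := by rw [hDdef]; ring
    rw [htarget]
    by_cases hD0 : D = 0
    · rw [hD0, zero_mul, zero_mul]
    · congr 1
      have hg : Integrable (fun a : ℝ => (s₂ a x + s₃ x) * pta a x) := by
        exact (hx.const_mul D⁻¹).congr
          (Filter.Eventually.of_forall fun a => inv_mul_cancel_left₀ hD0 _)
      have hcpta : Integrable (fun a : ℝ => s₃ x * pta a x) :=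
        (hpta_int x).const_mul (s₃ x)
      have hs2pta : Integrable (fun a : ℝ => s₂ a x * pta a x) := by
        refine (hg.sub hcpta).congr (Filter.Eventually.of_forall fun a => ?_)
        simp only [Pi.sub_apply]; ring
      have he2 : (fun a : ℝ => (s₂ a x + s₃ x) * pta a x)
          = fun a => s₂ a x * pta a x + s₃ x * pta a x := by
        funext a; ring
      rw [he2, integral_add hs2pta hcpta, hs₂_zero, integral_const_mul _ _, hpta_one]
      ring
  have hG2_int : Integrable (fun x : Fin d → ℝ => (m x - ψ) * s₃ x * px x) :=
    hG_int.integral_prod_right.congr hR5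
  have hRHS : (∫ o : ℝ × ℝ × (Fin d → ℝ),
        (m o.2.2 - ψ) * (s₁ o.1 o.2.1 o.2.2 + s₂ o.2.1 o.2.2 + s₃ o.2.2)
          * (py o.1 o.2.1 o.2.2 * pta o.2.1 o.2.2 * px o.2.2))
      = ∫ x : Fin d → ℝ, (m x - ψ) * s₃ x * px x := by
    rw [Measure.volume_eq_prod _ _, integral_prod_symm _ hInt2]
    have h1 : (∫ q : ℝ × (Fin d → ℝ),
        ∫ y : ℝ, (m q.2 - ψ) * (s₁ y q.1 q.2 + s₂ q.1 q.2 + s₃ q.2)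
          * (py y q.1 q.2 * pta q.1 q.2 * px q.2))
        = ∫ q : ℝ × (Fin d → ℝ),
            ((m q.2 - ψ) * (pta q.1 q.2 * px q.2)) * (s₂ q.1 q.2 + s₃ q.2) :=
      integral_congr_ae hR2
    rw [h1, Measure.volume_eq_prod _ _, integral_prod_symm _ hG_int]
    exact integral_congr_ae hR5
  -- combine
  rw [hLHS, hRHS]
  have hdiff : (∫ x : Fin d → ℝ, (s₃ x * px x) * m x)
      - (∫ x : Fin d → ℝ, (m x - ψ) * s₃ x * px x) = 0 := by
    rw [← integral_sub hL_int hG2_int]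
    have he : (fun x : Fin d → ℝ => (s₃ x * px x) * m x - (m x - ψ) * s₃ x * px x)
        = fun x => ψ * (s₃ x * px x) := by
      funext x; ring
    rw [he, integral_const_mul _ _, hs₃_zero, mul_zero]
  linarith [hdiff]
end

section
/- Let p(y|a,x), p(a|x), p̃(a|x), p(x) be nonnegative measurable functions with ∫ p(y|a,x) dy = 1 for all (a,x), ∫ p(a|x) da = 1 and ∫ p̃(a|x) da = 1 for all x, and ∫ p(x) dx = 1; write p(o) = p(y|a,x) p(a|x) p(x) and p̃(o) = p(y|a,x) p̃(a|x) p(x) for o = (y, a, x). Assume p(a|x) > 0 whenever p̃(a|x) > 0 and set w(x,a) = p̃(a|x)/p(a|x) (and 0 where p(a|x) = 0), μ(x,a) = ∫ y p(y|a,x) dy, and ψ = ∫ y p̃(o) do. Let s₁(y,a,x), s₂(a,x), s₃(x) be measurable with ∫ s₁(y,a,x) p(y|a,x) dy = 0 for all (a,x), ∫ s₂(a,x) p̃(a|x) da = 0 for all x, and ∫ s₃(x) p(x) dx = 0; set s(o) = s₁(y,a,x) + s₂(a,x) + s₃(x), and assume all integrands below are integrable. Then ∫ y s(o) p̃(o)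 do = ∫ w(x,a)(y − μ(x,a)) s(o) p(o) do + ∫ (μ(x,a) − ψ) s(o) p̃(o) do. -/
open MeasureTheory

/-- If `∫ F = k * c` -pattern: a weighted conditional-mean computation. -/
lemma srf_key {α : Type*} [MeasurableSpace α] {ν : Measure α} (F f g : α → ℝ) (c k : ℝ)
    (hF : ∀ y, F y = (f y + k) * (g y * c))
    (hFi : Integrable F ν) (hf0 : ∫ y, f y * g y ∂ν = 0) (hg1 : ∫ y, g y ∂ν = 1) :
    ∫ y, F y ∂ν = k * c := by
  rcases eq_or_ne c 0 with hc | hc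
  · simp [hF, hc]
  · have hg : Integrable g ν := by
      by_contra h
      rw [integral_undef h] at hg1; norm_num at hg1
    have h1 : Integrable (fun y => (f y + k) * g y) ν := by
      refine (hFi.const_mul c⁻¹).congr (Filter.Eventually.of_forall fun y => ?_)
      show c⁻¹ * F y = (f y + k) * g y
      rw [hF]; field_simp
    have hfg : Integrable (fun y => f y * g y) ν := by
      refine (h1.sub (hg.const_mul k)).congr (Filter.Eventually.of_forall fun y => ?_)
      show (f y + k) * g y - k * g y = f y * g y
      ring
    have : ∫ y, F y ∂ν = (∫ y, (f y + k) * g y ∂ν) * c := by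
      simp_rw [hF, ← mul_assoc]
      exact integral_mul_const c _
    rw [this]
    have : ∫ y, (f y + k) * g y ∂ν = (∫ y, f y * g y ∂ν) + ∫ y, k * g y ∂ν := by
      rw [← integral_add hfg (hg.const_mul k)]
      exact integral_congr_ae (Filter.Eventually.of_forall fun y => by ring)
    rw [this, hf0, integral_const_mul, hg1]
    ring

/-- Mean-zero property of the score under the shifted density. -/
lemma srf_score_mean_zero {d : ℕ}
    (py : ℝ → ℝ → (Fin d → ℝ) → ℝ) (pta : ℝ → (Fin d → ℝ) → ℝ)
    (px : (Fin d → ℝ) → ℝ)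
    (hpy_one : ∀ a x, ∫ y : ℝ, py y a x = 1)
    (hpta_one : ∀ x, ∫ a : ℝ, pta a x = 1)
    (s₁ : ℝ → ℝ → (Fin d → ℝ) → ℝ) (s₂ : ℝ → (Fin d → ℝ) → ℝ)
    (s₃ : (Fin d → ℝ) → ℝ)
    (hs₁_zero : ∀ a x, ∫ y : ℝ, s₁ y a x * py y a x = 0)
    (hs₂_zero : ∀ x, ∫ a : ℝ, s₂ a x * pta a x = 0)
    (hs₃_zero : ∫ x : Fin d → ℝ, s₃ x * px x = 0)
    (hG : Integrable (fun o : ℝ × ℝ × (Fin d → ℝ) =>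
      (s₁ o.1 o.2.1 o.2.2 + s₂ o.2.1 o.2.2 + s₃ o.2.2) *
        (py o.1 o.2.1 o.2.2 * pta o.2.1 o.2.2 * px o.2.2))
      (volume : Measure (ℝ × ℝ × (Fin d → ℝ)))) :
    (∫ o : ℝ × ℝ × (Fin d → ℝ),
      (s₁ o.1 o.2.1 o.2.2 + s₂ o.2.1 o.2.2 + s₃ o.2.2) *
        (py o.1 o.2.1 o.2.2 * pta o.2.1 o.2.2 * px o.2.2)) = 0 := by
  set G : ℝ × ℝ × (Fin d → ℝ) → ℝ := fun o =>
    (s₁ o.1 o.2.1 o.2.2 + s₂ o.2.1 o.2.2 + s₃ o.2.2) *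
      (py o.1 o.2.1 o.2.2 * pta o.2.1 o.2.2 * px o.2.2) with hGdef
  set H : ℝ × (Fin d → ℝ) → ℝ := fun q =>
    (s₂ q.1 q.2 + s₃ q.2) * (pta q.1 q.2 * px q.2) with hHdef
  rw [show (volume : Measure (ℝ × ℝ × (Fin d → ℝ)))
      = (volume : Measure ℝ).prod (volume : Measure (ℝ × (Fin d → ℝ))) from
      (Measure.volume_eq_prod _ _)] at hG ⊢
  have hsec := hG.prod_left_ae
  have heq : ∀ᵐ q : ℝ × (Fin d → ℝ), (∫ y, G (y, q)) = H q := by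
    filter_upwards [hsec] with q hq
    exact srf_key _ (fun y => s₁ y q.1 q.2) (fun y => py y q.1 q.2)
      (pta q.1 q.2 * px q.2) (s₂ q.1 q.2 + s₃ q.2)
      (fun y => by simp [hGdef]; ring) hq (hs₁_zero q.1 q.2) (hpy_one q.1 q.2)
  have hHint : Integrable H (volume : Measure (ℝ × (Fin d → ℝ))) :=
    (hG.integral_prod_right.congr heq)
  rw [integral_prod_symm _ hG]
  have : (∫ q : ℝ × (Fin d → ℝ), ∫ y, G (y, q)) = ∫ q : ℝ × (Fin d → ℝ), H q :=
    integral_congr_ae heq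
  rw [this]
  -- second level
  rw [show (volume : Measure (ℝ × (Fin d → ℝ)))
      = (volume : Measure ℝ).prod (volume : Measure ((Fin d → ℝ))) from
      (Measure.volume_eq_prod _ _)] at hHint ⊢
  have hsec2 := hHint.prod_left_ae
  have heq2 : ∀ᵐ x : Fin d → ℝ, (∫ a, H (a, x)) = s₃ x * px x := by
    filter_upwards [hsec2] with x hx
    exact srf_key _ (fun a => s₂ a x) (fun a => pta a x) (px x) (s₃ x)
      (fun a => by simp [hHdef]) hx (hs₂_zero x) (hpta_one x)
  rw [integral_prod_symm _ hHint, integral_congr_ae heq2, hs₃_zero]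

/-- Combined pathwise-differentiability identity underlying Proposition 1: `∫ y s p̃ = ∫ w (y − μ) s p + ∫ (μ − ψ) s p̃` with score `s = s₁ + s₂ + s₃`, i.e. the derivative of the shift-response estimand along the submodel equals the inner product of the score with the efficient influence function. -/
theorem srf_eif_pathwise_derivative
    {d : ℕ}
    -- the densities p(y|a,x), p(a|x), p̃(a|x), p(x)
    (py : ℝ → ℝ → (Fin d → ℝ) → ℝ) (pa pta : ℝ → (Fin d → ℝ) → ℝ)
    (px : (Fin d → ℝ) → ℝ)
    (hpy_meas : Measurable (fun o : ℝ × ℝ × (Fin d → ℝ) => py o.1 o.2.1 o.2.2))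
    (hpa_meas : Measurable (fun q : ℝ × (Fin d → ℝ) => pa q.1 q.2))
    (hpta_meas : Measurable (fun q : ℝ × (Fin d → ℝ) => pta q.1 q.2))
    (hpx_meas : Measurable px)
    (hpy_nn : ∀ y a x, 0 ≤ py y a x) (hpa_nn : ∀ a x, 0 ≤ pa a x)
    (hpta_nn : ∀ a x, 0 ≤ pta a x) (hpx_nn : ∀ x, 0 ≤ px x)
    -- normalization
    (hpy_one : ∀ a x, ∫ y : ℝ, py y a x = 1)
    (hpa_one : ∀ x, ∫ a : ℝ, pa a x = 1)
    (hpta_one : ∀ x, ∫ a : ℝ, pta a x = 1)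
    (hpx_one : ∫ x : Fin d → ℝ, px x = 1)
    -- positivity: p(a|x) > 0 whenever p̃(a|x) > 0
    (hpos : ∀ a x, 0 < pta a x → 0 < pa a x)
    -- the density ratio w(x, a) = p̃(a|x)/p(a|x) (and 0 where p(a|x) = 0)
    (w : (Fin d → ℝ) → ℝ → ℝ)
    (hw_def : ∀ x a, w x a = if pa a x = 0 then 0 else pta a x / pa a x)
    -- the outcome regression μ(x, a) = ∫ y p(y|a,x) dy
    (μ : (Fin d → ℝ) → ℝ → ℝ) (hμ_def : ∀ x a, μ x a = ∫ y : ℝ, y * py y a x)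
    -- ψ = ∫ y p̃(o) do
    (ψ : ℝ)
    (hψ_def : ψ = ∫ o : ℝ × ℝ × (Fin d → ℝ),
      o.1 * (py o.1 o.2.1 o.2.2 * pta o.2.1 o.2.2 * px o.2.2))
    -- the score components
    (s₁ : ℝ → ℝ → (Fin d → ℝ) → ℝ) (s₂ : ℝ → (Fin d → ℝ) → ℝ)
    (s₃ : (Fin d → ℝ) → ℝ)
    (hs₁_meas : Measurable (fun o : ℝ × ℝ × (Fin d → ℝ) => s₁ o.1 o.2.1 o.2.2))
    (hs₂_meas : Measurable (fun q : ℝ × (Fin d → ℝ) => s₂ q.1 q.2))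
    (hs₃_meas : Measurable s₃)
    (hs₁_zero : ∀ a x, ∫ y : ℝ, s₁ y a x * py y a x = 0)
    (hs₂_zero : ∀ x, ∫ a : ℝ, s₂ a x * pta a x = 0)
    (hs₃_zero : ∫ x : Fin d → ℝ, s₃ x * px x = 0)
    -- integrability of the displayed integrands
    (_ : Integrable (fun o : ℝ × ℝ × (Fin d → ℝ) =>
      o.1 * (s₁ o.1 o.2.1 o.2.2 + s₂ o.2.1 o.2.2 + s₃ o.2.2) * (py o.1 o.2.1 o.2.2 * pta o.2.1 o.2.2 * px o.2.2)) (volume : Measure (ℝ × ℝ × (Fin d → ℝ))))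
    (_ : Integrable (fun o : ℝ × ℝ × (Fin d → ℝ) =>
      w o.2.2 o.2.1 * (o.1 - μ o.2.2 o.2.1) * (s₁ o.1 o.2.1 o.2.2 + s₂ o.2.1 o.2.2 + s₃ o.2.2) * (py o.1 o.2.1 o.2.2 * pa o.2.1 o.2.2 * px o.2.2)) (volume : Measure (ℝ × ℝ × (Fin d → ℝ))))
    (_ : Integrable (fun o : ℝ × ℝ × (Fin d → ℝ) =>
      (μ o.2.2 o.2.1 - ψ) * (s₁ o.1 o.2.1 o.2.2 + s₂ o.2.1 o.2.2 + s₃ o.2.2) * (py o.1 o.2.1 o.2.2 * pta o.2.1 o.2.2 * px o.2.2)) (volume : Measure (ℝ × ℝ × (Fin d → ℝ))))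
    :
    (∫ o : ℝ × ℝ × (Fin d → ℝ),
        o.1 * (s₁ o.1 o.2.1 o.2.2 + s₂ o.2.1 o.2.2 + s₃ o.2.2) * (py o.1 o.2.1 o.2.2 * pta o.2.1 o.2.2 * px o.2.2))
      = (∫ o : ℝ × ℝ × (Fin d → ℝ),
        w o.2.2 o.2.1 * (o.1 - μ o.2.2 o.2.1) * (s₁ o.1 o.2.1 o.2.2 + s₂ o.2.1 o.2.2 + s₃ o.2.2) * (py o.1 o.2.1 o.2.2 * pa o.2.1 o.2.2 * px o.2.2))
        + (∫ o : ℝ × ℝ × (Fin d → ℝ),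
        (μ o.2.2 o.2.1 - ψ) * (s₁ o.1 o.2.1 o.2.2 + s₂ o.2.1 o.2.2 + s₃ o.2.2) * (py o.1 o.2.1 o.2.2 * pta o.2.1 o.2.2 * px o.2.2)) := by

  set S : ℝ × ℝ × (Fin d → ℝ) → ℝ := fun o => s₁ o.1 o.2.1 o.2.2 + s₂ o.2.1 o.2.2 + s₃ o.2.2 with hS
  set Pt : ℝ × ℝ × (Fin d → ℝ) → ℝ := fun o => py o.1 o.2.1 o.2.2 * pta o.2.1 o.2.2 * px o.2.2 with hPt
  rename_i h1 h2 h3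
  -- pointwise identity for the weighted term
  have key_w : ∀ o : ℝ × ℝ × (Fin d → ℝ),
      w o.2.2 o.2.1 * (o.1 - μ o.2.2 o.2.1) * S o *
        (py o.1 o.2.1 o.2.2 * pa o.2.1 o.2.2 * px o.2.2)
      = (o.1 - μ o.2.2 o.2.1) * S o * Pt o := by
    intro o
    rcases eq_or_ne (pa o.2.1 o.2.2) 0 with hpa0 | hpa0
    · have hpta0 : pta o.2.1 o.2.2 = 0 := by
        by_contra h
        have := hpos o.2.1 o.2.2 (lt_of_le_of_ne (hpta_nn _ _) (Ne.symm h))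
        exact absurd hpa0 (ne_of_gt this)
      simp [hPt, hpa0, hpta0]
    · rw [hw_def]
      simp only [if_neg hpa0, hPt]
      field_simp
  have h2' : Integrable (fun o : ℝ × ℝ × (Fin d → ℝ) =>
      (o.1 - μ o.2.2 o.2.1) * S o * Pt o) (volume : Measure (ℝ × ℝ × (Fin d → ℝ))) :=
    h2.congr (Filter.Eventually.of_forall key_w)
  have hrw : (∫ o : ℝ × ℝ × (Fin d → ℝ),
      w o.2.2 o.2.1 * (o.1 - μ o.2.2 o.2.1) * S o *
        (py o.1 o.2.1 o.2.2 * pa o.2.1 o.2.2 * px o.2.2))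
      = ∫ o : ℝ × ℝ × (Fin d → ℝ), (o.1 - μ o.2.2 o.2.1) * S o * Pt o :=
    integral_congr_ae (Filter.Eventually.of_forall key_w)
  rw [hrw]
  -- the residual term
  have hψG : Integrable (fun o : ℝ × ℝ × (Fin d → ℝ) => ψ * (S o * Pt o))
      (volume : Measure (ℝ × ℝ × (Fin d → ℝ))) := by
    refine ((h1.sub h2').sub h3).congr (Filter.Eventually.of_forall fun o => ?_)
    show o.1 * S o * Pt o - (o.1 - μ o.2.2 o.2.1) * S o * Pt o
      - (μ o.2.2 o.2.1 - ψ) * S o * Pt o = ψ * (S o * Pt o)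
    ring
  have hψG0 : (∫ o : ℝ × ℝ × (Fin d → ℝ), ψ * (S o * Pt o)) = 0 := by
    rcases eq_or_ne ψ 0 with hψ | hψ
    · simp [hψ]
    · have hGint : Integrable (fun o : ℝ × ℝ × (Fin d → ℝ) => S o * Pt o)
          (volume : Measure (ℝ × ℝ × (Fin d → ℝ))) := by
        refine (hψG.const_mul ψ⁻¹).congr (Filter.Eventually.of_forall fun o => ?_)
        show ψ⁻¹ * (ψ * (S o * Pt o)) = S o * Pt o
        field_simp
      rw [integral_const_mul]
      rw [srf_score_mean_zero py pta px hpy_one hpta_one s₁ s₂ s₃ hs₁_zero hs₂_zero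
        hs₃_zero hGint]
      ring
  -- combine
  have h3' : Integrable (fun o : ℝ × ℝ × (Fin d → ℝ) =>
      (μ o.2.2 o.2.1 - ψ) * S o * Pt o) (volume : Measure (ℝ × ℝ × (Fin d → ℝ))) := h3
  have h34 : Integrable (fun o : ℝ × ℝ × (Fin d → ℝ) =>
      (μ o.2.2 o.2.1 - ψ) * S o * Pt o + ψ * (S o * Pt o))
      (volume : Measure (ℝ × ℝ × (Fin d → ℝ))) := h3'.add hψG
  have split : (∫ o : ℝ × ℝ × (Fin d → ℝ), o.1 * S o * Pt o)
      = (∫ o : ℝ × ℝ × (Fin d → ℝ), (o.1 - μ o.2.2 o.2.1) * S o * Pt o)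
        + ((∫ o : ℝ × ℝ × (Fin d → ℝ), (μ o.2.2 o.2.1 - ψ) * S o * Pt o)
          + ∫ o : ℝ × ℝ × (Fin d → ℝ), ψ * (S o * Pt o)) :=
    calc (∫ o : ℝ × ℝ × (Fin d → ℝ), o.1 * S o * Pt o)
        = ∫ o : ℝ × ℝ × (Fin d → ℝ), ((o.1 - μ o.2.2 o.2.1) * S o * Pt o
            + ((μ o.2.2 o.2.1 - ψ) * S o * Pt o + ψ * (S o * Pt o))) :=
          integral_congr_ae (Filter.Eventually.of_forall fun o => by ring)
      _ = (∫ o : ℝ × ℝ × (Fin d → ℝ), (o.1 - μ o.2.2 o.2.1) * S o * Pt o)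
            + ∫ o : ℝ × ℝ × (Fin d → ℝ), ((μ o.2.2 o.2.1 - ψ) * S o * Pt o
              + ψ * (S o * Pt o)) := integral_add h2' h34
      _ = _ := by rw [integral_add h3' hψG]
  rw [split, hψG0, add_zero]
end

section
/- Let g: ℝ → ℝ be a strictly monotone continuously differentiable bijection whose inverse h = g⁻¹ is differentiable with h'(u) ≥ c₀ > 0 for all u ∈ ℝ. Let n ≥ 1, and let y₁, …, yₙ, μ₁, …, μₙ ∈ ℝ and w₁, …, wₙ ∈ ℝ with δ ≤ wᵢ ≤ M for constants 0 < δ ≤ M. Suppose ε̂ ∈ ℝ satisfies the first-order condition (1/n) Σ_{i=1}^n wᵢ · (yᵢ − h(g(μᵢ) + ε̂ wᵢ)) = 0. Then |ε̂| ≤ (1/(c₀ δ²)) · |(1/n) Σ_{i=1}^n wᵢ (yᵢ − μᵢ)|. -/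
open Finset

/-- Bound on the fluctuation parameter `ε̂` (Equation `epsilon-bound`) in the proof of
Theorem 2: if `ε̂` is a stationary point of the targeted regularization risk, then `|ε̂|` is
controlled by the weighted empirical residual of the unperturbed outcome model. -/
theorem targeted_regularization_epsilon_bound
    (g : ℝ → ℝ) (hg_bij : Function.Bijective g)
    (hg_mono : StrictMono g ∨ StrictAnti g) (hg_C1 : ContDiff ℝ 1 g)
    -- the inverse h = g⁻¹ is differentiable with derivative h' ≥ c₀ > 0
    (h' : ℝ → ℝ) (hh : ∀ u : ℝ, HasDerivAt (Function.invFun g) (h' u) u)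
    (c₀ : ℝ) (hc₀ : 0 < c₀) (hh' : ∀ u : ℝ, c₀ ≤ h' u)
    {n : ℕ} (hn : 1 ≤ n)
    (y μv w : Fin n → ℝ)
    (δ M : ℝ) (hδ : 0 < δ) (hδM : δ ≤ M)
    (hw : ∀ i, δ ≤ w i ∧ w i ≤ M)
    (εhat : ℝ)
    -- the first-order condition
    (hfoc : (1 / n : ℝ) * ∑ i : Fin n,
        w i * (y i - Function.invFun g (g (μv i) + εhat * w i)) = 0) :
    |εhat| ≤ (1 / (c₀ * δ ^ 2)) * |(1 / n : ℝ) * ∑ i : Fin n, w i * (y i - μv i)| := by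
  set h : ℝ → ℝ := Function.invFun g with hh_def
  have hdiff : Differentiable ℝ h := fun u => (hh u).differentiableAt
  have hderiv : ∀ u, c₀ ≤ deriv h u := fun u => by
    rw [(hh u).deriv]; exact hh' u
  have key : ∀ a b : ℝ, a ≤ b → c₀ * (b - a) ≤ h b - h a := fun a b hab =>
    mul_sub_le_image_sub_of_le_deriv hdiff hderiv hab
  have hleft : ∀ x : ℝ, h (g x) = x := fun x =>
    Function.leftInverse_invFun hg_bij.injective x
  have hnpos : (0 : ℝ) < n := by exact_mod_cast hn
  have hn0 : (1 / n : ℝ) ≠ 0 := by positivity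
  have hfoc' : ∑ i : Fin n, w i * (y i - h (g (μv i) + εhat * w i)) = 0 := by
    rcases mul_eq_zero.mp hfoc with h1 | h1
    · exact absurd h1 hn0
    · exact h1
  set S := ∑ i : Fin n, w i * (y i - μv i) with hS
  have hsplit : S = ∑ i : Fin n, w i * (h (g (μv i) + εhat * w i) - μv i) := by
    have : S = (∑ i : Fin n, w i * (y i - h (g (μv i) + εhat * w i)))
        + ∑ i : Fin n, w i * (h (g (μv i) + εhat * w i) - μv i) := by
      rw [← Finset.sum_add_distrib]
      apply Finset.sum_congr rfl
      intro i _
      ring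
    rw [this, hfoc', zero_add]
  have hbound : (n : ℝ) * (c₀ * δ ^ 2) * |εhat| ≤ |S| := by
    rcases le_or_gt 0 εhat with hε | hε
    · -- each term ≥ c₀ δ² ε̂
      have hterm : ∀ i : Fin n, c₀ * δ ^ 2 * εhat ≤
          w i * (h (g (μv i) + εhat * w i) - μv i) := by
        intro i
        obtain ⟨hwl, _⟩ := hw i
        have hwpos : 0 < w i := lt_of_lt_of_le hδ hwl
        have hab : g (μv i) ≤ g (μv i) + εhat * w i := by nlinarith
        have := key (g (μv i)) (g (μv i) + εhat * w i) hab
        rw [hleft] at this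
        have h1 : c₀ * (εhat * w i) ≤ h (g (μv i) + εhat * w i) - μv i := by
          linarith [this]
        have hw2 : δ ^ 2 ≤ w i ^ 2 := pow_le_pow_left₀ hδ.le hwl 2
        nlinarith [mul_le_mul_of_nonneg_left h1 hwpos.le,
          mul_le_mul_of_nonneg_left hw2 (mul_nonneg hc₀.le hε)]
      have hsum : (n : ℝ) * (c₀ * δ ^ 2 * εhat) ≤ S := by
        rw [hsplit]
        calc (n : ℝ) * (c₀ * δ ^ 2 * εhat)
            = ∑ _i : Fin n, c₀ * δ ^ 2 * εhat := by
              rw [Finset.sum_const, Finset.card_univ, Fintype.card_fin]; ring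
          _ ≤ _ := Finset.sum_le_sum fun i _ => hterm i
      have : (n : ℝ) * (c₀ * δ ^ 2) * |εhat| = (n : ℝ) * (c₀ * δ ^ 2 * εhat) := by
        rw [abs_of_nonneg hε]; ring
      rw [this]
      exact le_trans hsum (le_abs_self S)
    · -- each term ≤ c₀ δ² ε̂ < 0
      have hterm : ∀ i : Fin n, w i * (h (g (μv i) + εhat * w i) - μv i) ≤
          c₀ * δ ^ 2 * εhat := by
        intro i
        obtain ⟨hwl, _⟩ := hw i
        have hwpos : 0 < w i := lt_of_lt_of_le hδ hwl
        have hab : g (μv i) + εhat * w i ≤ g (μv i) := by nlinarith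
        have := key (g (μv i) + εhat * w i) (g (μv i)) hab
        rw [hleft] at this
        have h1 : h (g (μv i) + εhat * w i) - μv i ≤ c₀ * (εhat * w i) := by
          linarith [this]
        have hw2 : δ ^ 2 ≤ w i ^ 2 := pow_le_pow_left₀ hδ.le hwl 2
        have hcε : c₀ * εhat ≤ 0 := mul_nonpos_of_nonneg_of_nonpos hc₀.le hε.le
        nlinarith [mul_le_mul_of_nonneg_left h1 hwpos.le,
          mul_le_mul_of_nonpos_left hw2 hcε]
      have hsum : S ≤ (n : ℝ) * (c₀ * δ ^ 2 * εhat) := by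
        rw [hsplit]
        calc ∑ i : Fin n, w i * (h (g (μv i) + εhat * w i) - μv i)
            ≤ ∑ _i : Fin n, c₀ * δ ^ 2 * εhat := Finset.sum_le_sum fun i _ => hterm i
          _ = (n : ℝ) * (c₀ * δ ^ 2 * εhat) := by
              rw [Finset.sum_const, Finset.card_univ, Fintype.card_fin]; ring
      have heq : (n : ℝ) * (c₀ * δ ^ 2) * |εhat| = -((n : ℝ) * (c₀ * δ ^ 2 * εhat)) := by
        rw [abs_of_neg hε]; ring
      rw [heq]
      have := neg_le_abs S
      linarith
  have hcd : (0 : ℝ) < c₀ * δ ^ 2 := by positivity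
  have habs : |(1 / n : ℝ) * S| = (1 / n) * |S| := by
    rw [abs_mul, abs_of_pos (by positivity : (0:ℝ) < 1 / n)]
  rw [habs]
  have heq : 1 / (c₀ * δ ^ 2) * (1 / n * |S|) = |S| / (n * (c₀ * δ ^ 2)) := by
    field_simp
  rw [heq, le_div_iff₀ (by positivity)]
  nlinarith [hbound]
end

section
/- Let (Ω, 𝓕, P) be a probability space with random variables X: Ω → ℝ^d, A: Ω → ℝ. Let g: ℝ → ℝ be a strictly monotone continuously differentiable bijection whose inverse h = g⁻¹ is differentiable with |h'(u)| ≤ C for all u ∈ ℝ. Let μ, μ̂, w, ŵ: ℝ^d × ℝ → ℝ be measurable and ε̂ ∈ ℝ, and define μ̃(x, a) = h(g(μ̂(x, a)) + ε̂ ŵ(x, a)). Suppose |ŵ(X, A)| ≤ M, |ŵ(X, A) − w(X, A)| ≤ r₂, and |μ(X, A) − μ̂(X, A)| ≤ r₁ almost surely, with all displayed random variables integrable. Then |E[(ŵ(X, A) − w(X, A)) · (μ(X, A) − μ̃(X, A))]| ≤ r₂ r₁ + C · M · r₂ · |ε̂|. -/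
open MeasureTheory

/-- Mean-value-theorem bound (Equation `check-mate`) in the proof of Theorem 2: the product
bias with the perturbed outcome model `μ̃ = g⁻¹(g(μ̂) + ε̂ ŵ)` exceeds the usual product bias
`‖ŵ − w‖_∞ ‖μ − μ̂‖_∞` by at most a term proportional to `‖ŵ − w‖_∞ |ε̂|`. -/
theorem targeted_regularization_perturbed_product_bias
    {Ω : Type*} [MeasurableSpace Ω] (P : Measure Ω) [IsProbabilityMeasure P]
    {d : ℕ} (X : Ω → (Fin d → ℝ)) (A : Ω → ℝ)
    (hX : Measurable X) (hA : Measurable A)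
    (g : ℝ → ℝ) (hg_bij : Function.Bijective g)
    (hg_mono : StrictMono g ∨ StrictAnti g) (hg_C1 : ContDiff ℝ 1 g)
    -- the inverse h = g⁻¹ is differentiable with |h'| ≤ C
    (h' : ℝ → ℝ) (hh : ∀ u : ℝ, HasDerivAt (Function.invFun g) (h' u) u)
    (C : ℝ) (hC : ∀ u : ℝ, |h' u| ≤ C)
    (μ μhat w what : (Fin d → ℝ) → ℝ → ℝ)
    (hμ_meas : Measurable (Function.uncurry μ))
    (hμhat_meas : Measurable (Function.uncurry μhat))
    (hw_meas : Measurable (Function.uncurry w))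
    (hwhat_meas : Measurable (Function.uncurry what))
    (εhat : ℝ)
    -- the perturbed outcome model
    (μt : (Fin d → ℝ) → ℝ → ℝ)
    (hμt : ∀ x a, μt x a = Function.invFun g (g (μhat x a) + εhat * what x a))
    (M r₁ r₂ : ℝ)
    (hM : ∀ᵐ ω ∂P, |what (X ω) (A ω)| ≤ M)
    (hr₂ : ∀ᵐ ω ∂P, |what (X ω) (A ω) - w (X ω) (A ω)| ≤ r₂)
    (hr₁ : ∀ᵐ ω ∂P, |μ (X ω) (A ω) - μhat (X ω) (A ω)| ≤ r₁)
    -- integrability of the displayed random variables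
    (h_int : Integrable (fun ω =>
      (what (X ω) (A ω) - w (X ω) (A ω)) * (μ (X ω) (A ω) - μt (X ω) (A ω))) P)
    (h_int' : Integrable (fun ω =>
      (what (X ω) (A ω) - w (X ω) (A ω)) * (μ (X ω) (A ω) - μhat (X ω) (A ω))) P)
    (h_int'' : Integrable (fun ω => μt (X ω) (A ω)) P) :
    |∫ ω, (what (X ω) (A ω) - w (X ω) (A ω)) * (μ (X ω) (A ω) - μt (X ω) (A ω)) ∂P|
      ≤ r₂ * r₁ + C * M * r₂ * |εhat| := by

  have hC0 : 0 ≤ C := le_trans (abs_nonneg _) (hC 0)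
  -- Lipschitz bound for the inverse
  have lip : ∀ u v : ℝ, |Function.invFun g u - Function.invFun g v| ≤ C * |u - v| := by
    intro u v
    have := Convex.norm_image_sub_le_of_norm_hasDerivWithin_le
      (f := Function.invFun g) (f' := h') (C := C) (s := Set.univ)
      (fun x _ => (hh x).hasDerivWithinAt) (fun x _ => hC x)
      convex_univ (Set.mem_univ v) (Set.mem_univ u)
    simpa [Real.norm_eq_abs] using this
  have key : ∀ᵐ ω ∂P,
      |(what (X ω) (A ω) - w (X ω) (A ω)) * (μ (X ω) (A ω) - μt (X ω) (A ω))|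
        ≤ r₂ * r₁ + C * M * r₂ * |εhat| := by
    filter_upwards [hM, hr₂, hr₁] with ω hMω hr₂ω hr₁ω
    set x := X ω; set a := A ω
    have hr₂0 : 0 ≤ r₂ := le_trans (abs_nonneg _) hr₂ω
    have hμhat_eq : μhat x a = Function.invFun g (g (μhat x a)) :=
      (Function.leftInverse_invFun hg_bij.injective (μhat x a)).symm
    have hdiff : |μhat x a - μt x a| ≤ C * M * |εhat| := by
      have hb := lip (g (μhat x a)) (g (μhat x a) + εhat * what x a)
      rw [← hμhat_eq, ← hμt x a] at hb
      calc |μhat x a - μt x a|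
          ≤ C * |g (μhat x a) - (g (μhat x a) + εhat * what x a)| := hb
        _ = C * (|εhat| * |what x a|) := by
            rw [show g (μhat x a) - (g (μhat x a) + εhat * what x a)
              = -(εhat * what x a) by ring, abs_neg, abs_mul]
        _ ≤ C * (|εhat| * M) := by
            have := mul_le_mul_of_nonneg_left hMω (abs_nonneg εhat)
            exact mul_le_mul_of_nonneg_left this hC0
        _ = C * M * |εhat| := by ring
    have h2 : |μ x a - μt x a| ≤ r₁ + C * M * |εhat| := by
      calc |μ x a - μt x a| = |(μ x a - μhat x a) + (μhat x a - μt x a)| := by ring_nf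
        _ ≤ |μ x a - μhat x a| + |μhat x a - μt x a| := abs_add_le _ _
        _ ≤ r₁ + C * M * |εhat| := add_le_add hr₁ω hdiff
    calc |(what x a - w x a) * (μ x a - μt x a)|
        = |what x a - w x a| * |μ x a - μt x a| := abs_mul _ _
      _ ≤ r₂ * (r₁ + C * M * |εhat|) :=
          mul_le_mul hr₂ω h2 (abs_nonneg _) hr₂0
      _ = r₂ * r₁ + C * M * r₂ * |εhat| := by ring
  calc |∫ ω, (what (X ω) (A ω) - w (X ω) (A ω)) * (μ (X ω) (A ω) - μt (X ω) (A ω)) ∂P|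
      ≤ ∫ ω, |(what (X ω) (A ω) - w (X ω) (A ω)) * (μ (X ω) (A ω) - μt (X ω) (A ω))| ∂P := by
        simpa only [Real.norm_eq_abs] using norm_integral_le_integral_norm
          (fun ω => (what (X ω) (A ω) - w (X ω) (A ω)) * (μ (X ω) (A ω) - μt (X ω) (A ω)))
    _ ≤ ∫ _ω, (r₂ * r₁ + C * M * r₂ * |εhat|) ∂P :=
        integral_mono_ae h_int.abs (integrable_const _) key
    _ = r₂ * r₁ + C * M * r₂ * |εhat| := by simp
end

section
/- Let (Ω, 𝓕, P) be a probability space with X: Ω → ℝ^d, A, Ã: Ω → ℝ, Y: Ω → ℝ integrable; let μ(X, A) be a version of E[Y | σ(X, A)]; let w(x,·) be the density of the conditional law of Ã given X = x with respect to the conditional law of A given X = x, and ψ = E[μ(X, Ã)]. Let g: ℝ → ℝ be a strictly monotone C¹ bijection whose inverse h = g⁻¹ is differentiable with c₀ ≤ h'(u) ≤ C for all u, with c₀ > 0. Let μ̂, ŵ be measurable with δ ≤ ŵ ≤ M pointwise (0 < δ ≤ M), |ŵ(X,A) − w(X,A)| ≤ r₂ a.s., |μ(X,A) − μ̂(X,A)|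 ≤ r₁ a.s., and all displayed expectations finite. Let ε̂ ∈ ℝ, μ̃(x,a) = h(g(μ̂(x,a)) + ε̂ ŵ(x,a)), and sample points (xᵢ, aᵢ, ãᵢ, yᵢ), i = 1, …, n, satisfy (1/n) Σᵢ ŵ(xᵢ,aᵢ)(yᵢ − μ̃(xᵢ,aᵢ)) = 0; set ψ̂ = (1/n) Σᵢ μ̃(xᵢ, ãᵢ). Define D₁ = (1/n) Σᵢ [μ̃(xᵢ,ãᵢ) + ŵ(xᵢ,aᵢ)(yᵢ − μ̃(xᵢ,aᵢ))] − E[μ̃(X,Ã) + ŵ(X,A)(Y − μ̃(X,A))] and D₂ = (1/n) Σᵢ ŵ(xᵢ,aᵢ)(yᵢ − μ̂(xᵢ,aᵢ)) − E[ŵ(X,A)(Y − μ̂(X,A))]. Then |ψ̂ − ψ| ≤ |D₁| + r₁ r₂ + (C M r₂ / (c₀ δ²)) · (|D₂| + M r₁). -/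
open MeasureTheory ProbabilityTheory Finset

set_option maxHeartbeats 2000000 in
/-- Deterministic core of Theorem 2 (statement 2): combining the exact error decomposition,
the mean-value-theorem bound on the perturbed product bias, the bound on the fluctuation
parameter `ε̂` and the tower-property rewriting, the targeted-regularization plugin estimator
satisfies `|ψ̂ − ψ| ≤ |D₁| + r₁ r₂ + (C M r₂ / (c₀ δ²)) (|D₂| + M r₁)`. -/
theorem targeted_regularization_error_bound
    {Ω : Type*} [MeasurableSpace Ω] (P : Measure Ω) [IsProbabilityMeasure P]
    {d : ℕ} (X : Ω → (Fin d → ℝ)) (A Atil : Ω → ℝ) (Y : Ω → ℝ)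
    (hX : Measurable X) (hA : Measurable A) (hAtil : Measurable Atil) (hY : Measurable Y)
    (hYint : Integrable Y P)
    -- `μ(X, A)` is a version of `E[Y | σ(X, A)]`
    (μ : (Fin d → ℝ) → ℝ → ℝ) (hμ : Measurable (Function.uncurry μ))
    (hμver : (fun ω => μ (X ω) (A ω)) =ᵐ[P]
      P[Y | MeasurableSpace.comap (fun ω => (X ω, A ω)) inferInstance])
    -- `w(x, ·)` is the density of the conditional law of `Ã` given `X = x` with respect to
    -- the conditional law of `A` given `X = x`
    (κ ν : Kernel (Fin d → ℝ) ℝ) [IsMarkovKernel κ] [IsMarkovKernel ν]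
    (hκ : Measure.map (fun ω => (X ω, A ω)) P = (Measure.map X P).compProd κ)
    (hν : Measure.map (fun ω => (X ω, Atil ω)) P = (Measure.map X P).compProd ν)
    (w : (Fin d → ℝ) → ℝ → ℝ) (hw : Measurable (Function.uncurry w))
    (hwnn : ∀ x a, 0 ≤ w x a)
    (hac : ∀ᵐ x ∂(Measure.map X P),
      ν x = (κ x).withDensity (fun a => ENNReal.ofReal (w x a)))
    -- the link function: strictly monotone C¹ bijection with inverse `h = g⁻¹`
    -- differentiable and `c₀ ≤ h' ≤ C`, `c₀ > 0`
    (g : ℝ → ℝ) (hg_bij : Function.Bijective g)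
    (hg_mono : StrictMono g ∨ StrictAnti g) (hg_C1 : ContDiff ℝ 1 g)
    (h' : ℝ → ℝ) (hh : ∀ u : ℝ, HasDerivAt (Function.invFun g) (h' u) u)
    (c₀ C : ℝ) (hc₀ : 0 < c₀) (hh' : ∀ u : ℝ, c₀ ≤ h' u ∧ h' u ≤ C)
    -- the nuisance estimators and their error bounds
    (μhat what : (Fin d → ℝ) → ℝ → ℝ)
    (hμhat_meas : Measurable (Function.uncurry μhat))
    (hwhat_meas : Measurable (Function.uncurry what))
    (δ M : ℝ) (hδ : 0 < δ) (hδM : δ ≤ M)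
    (hwhat_bdd : ∀ x a, δ ≤ what x a ∧ what x a ≤ M)
    (r₁ r₂ : ℝ)
    (hr₂ : ∀ᵐ ω ∂P, |what (X ω) (A ω) - w (X ω) (A ω)| ≤ r₂)
    (hr₁ : ∀ᵐ ω ∂P, |μ (X ω) (A ω) - μhat (X ω) (A ω)| ≤ r₁)
    -- the fluctuation parameter and perturbed outcome model
    (εhat : ℝ) (μt : (Fin d → ℝ) → ℝ → ℝ)
    (hμt : ∀ x a, μt x a = Function.invFun g (g (μhat x a) + εhat * what x a))
    -- all displayed expectations are finite
    (hμAtil_int : Integrable (fun ω => μ (X ω) (Atil ω)) P)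
    (hμtAtil_int : Integrable (fun ω => μt (X ω) (Atil ω)) P)
    (hres_int : Integrable (fun ω => what (X ω) (A ω) * (Y ω - μt (X ω) (A ω))) P)
    (hres_int' : Integrable (fun ω => what (X ω) (A ω) * (Y ω - μhat (X ω) (A ω))) P)
    (hres_int'' : Integrable (fun ω =>
      what (X ω) (A ω) * (μ (X ω) (A ω) - μt (X ω) (A ω))) P)
    (hres_int''' : Integrable (fun ω =>
      what (X ω) (A ω) * (μ (X ω) (A ω) - μhat (X ω) (A ω))) P)
    (hres_int'''' : Integrable (fun ω =>
      w (X ω) (A ω) * (μ (X ω) (A ω) - μt (X ω) (A ω))) P)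
    (hprod_int : Integrable (fun ω =>
      (what (X ω) (A ω) - w (X ω) (A ω)) * (μ (X ω) (A ω) - μt (X ω) (A ω))) P)
    -- sample points and the first-order condition
    {n : ℕ} (hn : 1 ≤ n)
    (x : Fin n → (Fin d → ℝ)) (a ta y : Fin n → ℝ)
    (hfoc : (1 / n : ℝ) * ∑ i : Fin n, what (x i) (a i) * (y i - μt (x i) (a i)) = 0)
    -- the plugin estimator, the estimand and the empirical-process terms
    (ψhat ψ D₁ D₂ : ℝ)
    (hψhat : ψhat = (1 / n : ℝ) * ∑ i : Fin n, μt (x i) (ta i))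
    (hψ : ψ = ∫ ω, μ (X ω) (Atil ω) ∂P)
    (hD₁ : D₁ = (1 / n : ℝ) * ∑ i : Fin n,
        (μt (x i) (ta i) + what (x i) (a i) * (y i - μt (x i) (a i)))
      - ∫ ω, (μt (X ω) (Atil ω) + what (X ω) (A ω) * (Y ω - μt (X ω) (A ω))) ∂P)
    (hD₂ : D₂ = (1 / n : ℝ) * ∑ i : Fin n, what (x i) (a i) * (y i - μhat (x i) (a i))
      - ∫ ω, what (X ω) (A ω) * (Y ω - μhat (X ω) (A ω)) ∂P) :
    |ψhat - ψ| ≤ |D₁| + r₁ * r₂ + (C * M * r₂ / (c₀ * δ ^ 2)) * (|D₂| + M * r₁) := by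
  
  classical
  -- basic positivity facts
  have hC0 : c₀ ≤ C := le_trans (hh' 0).1 (hh' 0).2
  have hCpos : 0 < C := lt_of_lt_of_le hc₀ hC0
  have hMpos : 0 < M := lt_of_lt_of_le hδ hδM
  have hr₁0 : 0 ≤ r₁ := by
    obtain ⟨ω, hω⟩ := hr₁.exists
    exact le_trans (abs_nonneg _) hω
  have hr₂0 : 0 ≤ r₂ := by
    obtain ⟨ω, hω⟩ := hr₂.exists
    exact le_trans (abs_nonneg _) hω
  set hfun : ℝ → ℝ := Function.invFun g with hhfun
  have hgh : ∀ t, hfun (g t) = t := fun t => Function.leftInverse_invFun hg_bij.injective t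
  have hdiffh : Differentiable ℝ hfun := fun u => (hh u).differentiableAt
  -- monotonicity consequences of the derivative bounds
  have m1 : Monotone (fun u => hfun u - c₀ * u) := by
    apply monotone_of_deriv_nonneg
    · exact hdiffh.sub (differentiable_id.const_mul c₀)
    · intro u
      have hd : HasDerivAt (fun u => hfun u - c₀ * u) (h' u - c₀ * 1) u :=
        (hh u).sub ((hasDerivAt_id u).const_mul c₀)
      rw [hd.deriv]
      linarith [(hh' u).1]
  have m2 : Monotone (fun u => C * u - hfun u) := by
    apply monotone_of_deriv_nonneg
    · exact (differentiable_id.const_mul C).sub hdiffh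
    · intro u
      have hd : HasDerivAt (fun u => C * u - hfun u) (C * 1 - h' u) u :=
        ((hasDerivAt_id u).const_mul C).sub (hh u)
      rw [hd.deriv]
      linarith [(hh' u).2]
  have sandwich₁ : ∀ s t : ℝ, 0 ≤ t →
      c₀ * t ≤ hfun (s + t) - hfun s ∧ hfun (s + t) - hfun s ≤ C * t := by
    intro s t ht
    have h1 : hfun s - c₀ * s ≤ hfun (s + t) - c₀ * (s + t) :=
      m1 (le_add_of_nonneg_right ht)
    have h2 : C * s - hfun s ≤ C * (s + t) - hfun (s + t) :=
      m2 (le_add_of_nonneg_right ht)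
    constructor <;> nlinarith
  have sandwich₂ : ∀ s t : ℝ, t ≤ 0 →
      C * t ≤ hfun (s + t) - hfun s ∧ hfun (s + t) - hfun s ≤ c₀ * t := by
    intro s t ht
    have h1 : hfun (s + t) - c₀ * (s + t) ≤ hfun s - c₀ * s :=
      m1 (by linarith)
    have h2 : C * (s + t) - hfun (s + t) ≤ C * s - hfun s :=
      m2 (by linarith)
    constructor <;> nlinarith
  -- the key pointwise identity for the perturbed model
  have heqq : ∀ (xx : Fin d → ℝ) (aa : ℝ), μt xx aa - μhat xx aa =
      hfun (g (μhat xx aa) + εhat * what xx aa) - hfun (g (μhat xx aa)) := by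
    intro xx aa
    rw [hμt xx aa, hgh]
  -- pointwise bound |μt - μhat| ≤ C M |ε̂|
  have hdiffb : ∀ (xx : Fin d → ℝ) (aa : ℝ), |μt xx aa - μhat xx aa| ≤ C * M * |εhat| := by
    intro xx aa
    obtain ⟨hw1, hw2⟩ := hwhat_bdd xx aa
    have hwpos : 0 < what xx aa := lt_of_lt_of_le hδ hw1
    rcases le_or_gt 0 εhat with hε | hε
    · have ht : 0 ≤ εhat * what xx aa := mul_nonneg hε hwpos.le
      obtain ⟨hl, hu⟩ := sandwich₁ (g (μhat xx aa)) (εhat * what xx aa) ht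
      rw [heqq xx aa, abs_of_nonneg (by linarith [mul_nonneg hc₀.le ht]), abs_of_nonneg hε]
      linarith [mul_le_mul_of_nonneg_left hw2 (mul_nonneg hCpos.le hε)]
    · have ht : εhat * what xx aa ≤ 0 :=
        mul_nonpos_iff.mpr (Or.inr ⟨hε.le, hwpos.le⟩)
      obtain ⟨hl, hu⟩ := sandwich₂ (g (μhat xx aa)) (εhat * what xx aa) ht
      rw [heqq xx aa, abs_of_nonpos (by nlinarith [mul_nonneg hc₀.le (neg_nonneg.mpr ht)]),
        abs_of_neg hε]
      linarith [mul_le_mul_of_nonneg_left hw2 (mul_nonneg hCpos.le (neg_nonneg.mpr hε.le))]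
  -- pointwise sign-consistent lower bound on ŵ (μt - μhat)
  have hterm : ∀ (xx : Fin d → ℝ) (aa : ℝ),
      (0 ≤ εhat → c₀ * δ ^ 2 * εhat ≤ what xx aa * (μt xx aa - μhat xx aa)) ∧
      (εhat ≤ 0 → what xx aa * (μt xx aa - μhat xx aa) ≤ c₀ * δ ^ 2 * εhat) := by
    intro xx aa
    obtain ⟨hw1, hw2⟩ := hwhat_bdd xx aa
    have hwpos : 0 < what xx aa := lt_of_lt_of_le hδ hw1
    have h7 : δ * δ ≤ what xx aa * what xx aa := mul_self_le_mul_self hδ.le hw1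
    constructor
    · intro hε
      have ht : 0 ≤ εhat * what xx aa := mul_nonneg hε hwpos.le
      have hl := (sandwich₁ (g (μhat xx aa)) (εhat * what xx aa) ht).1
      rw [← heqq xx aa] at hl
      have key := mul_le_mul_of_nonneg_left hl hwpos.le
      have key2 := mul_nonneg (mul_nonneg hc₀.le hε) (sub_nonneg.mpr h7)
      linarith [key, key2]
    · intro hε
      have ht : εhat * what xx aa ≤ 0 :=
        mul_nonpos_iff.mpr (Or.inr ⟨hε, hwpos.le⟩)
      have hu := (sandwich₂ (g (μhat xx aa)) (εhat * what xx aa) ht).2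
      rw [← heqq xx aa] at hu
      have key := mul_le_mul_of_nonneg_left hu hwpos.le
      have key2 := mul_nonneg (mul_nonneg hc₀.le (neg_nonneg.mpr hε)) (sub_nonneg.mpr h7)
      linarith [key, key2]
  -- measurability facts
  have hXA : Measurable fun ω => (X ω, A ω) := hX.prodMk hA
  have hXAt : Measurable fun ω => (X ω, Atil ω) := hX.prodMk hAtil
  have hm : MeasurableSpace.comap (fun ω => (X ω, A ω)) inferInstance ≤ ‹MeasurableSpace Ω› :=
    hXA.comap_le
  haveI : SigmaFinite (P.trim hm) := inferInstance
  have hwhatXA : Measurable fun ω => what (X ω) (A ω) := hwhat_meas.comp hXA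
  -- the tower property: E[ŵ (Y - μ)] = 0
  have htower0 : ∫ ω, what (X ω) (A ω) * (Y ω - μ (X ω) (A ω)) ∂P = 0 := by
    have hFsm : StronglyMeasurable[MeasurableSpace.comap (fun ω => (X ω, A ω)) inferInstance]
        (fun ω => what (X ω) (A ω)) := by
      have hproj : Measurable[MeasurableSpace.comap (fun ω => (X ω, A ω)) inferInstance]
          (fun ω => (X ω, A ω)) := measurable_iff_comap_le.mpr le_rfl
      exact (hwhat_meas.comp hproj).stronglyMeasurable
    have hbd : ∀ᵐ ω ∂P, ‖what (X ω) (A ω)‖ ≤ M := by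
      refine ae_of_all _ fun ω => ?_
      rw [Real.norm_eq_abs, abs_of_nonneg (le_of_lt (lt_of_lt_of_le hδ (hwhat_bdd _ _).1))]
      exact (hwhat_bdd _ _).2
    have hFY : Integrable (fun ω => what (X ω) (A ω) * Y ω) P :=
      hYint.bdd_mul hwhatXA.aestronglyMeasurable hbd
    have hFc : Integrable (fun ω =>
        what (X ω) (A ω) * (P[Y|MeasurableSpace.comap (fun ω => (X ω, A ω)) inferInstance]) ω) P :=
      integrable_condExp.bdd_mul hwhatXA.aestronglyMeasurable hbd
    have hFμ : Integrable (fun ω => what (X ω) (A ω) * μ (X ω) (A ω)) P := by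
      refine hFc.congr ?_
      filter_upwards [hμver] with ω hω
      rw [← hω]
    have hmul := condExp_mul_of_stronglyMeasurable_left hFsm
      (show Integrable ((fun ω => what (X ω) (A ω)) * Y) P from hFY) hYint
    have e1 : ∫ ω, what (X ω) (A ω) * Y ω ∂P = ∫ ω, what (X ω) (A ω) *
        (P[Y|MeasurableSpace.comap (fun ω => (X ω, A ω)) inferInstance]) ω ∂P := by
      calc ∫ ω, what (X ω) (A ω) * Y ω ∂P
          = ∫ ω, (P[(fun ω => what (X ω) (A ω)) * Y |
              MeasurableSpace.comap (fun ω => (X ω, A ω)) inferInstance]) ω ∂P :=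
            (integral_condExp hm).symm
        _ = _ := integral_congr_ae (hmul.mono fun ω hω => hω)
    have e2 : ∫ ω, what (X ω) (A ω) * μ (X ω) (A ω) ∂P = ∫ ω, what (X ω) (A ω) *
        (P[Y|MeasurableSpace.comap (fun ω => (X ω, A ω)) inferInstance]) ω ∂P := by
      refine integral_congr_ae ?_
      filter_upwards [hμver] with ω hω
      rw [hω]
    have e3 : ∫ ω, what (X ω) (A ω) * (Y ω - μ (X ω) (A ω)) ∂P
        = (∫ ω, what (X ω) (A ω) * Y ω ∂P) - ∫ ω, what (X ω) (A ω) * μ (X ω) (A ω) ∂P := by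
      rw [← integral_sub hFY hFμ]
      exact integral_congr_ae (ae_of_all _ fun ω => by ring)
    rw [e3, e1, e2, sub_self]
  -- tower rewriting for any outcome model q
  have tw : ∀ q : (Fin d → ℝ) → ℝ → ℝ,
      Integrable (fun ω => what (X ω) (A ω) * (Y ω - q (X ω) (A ω))) P →
      Integrable (fun ω => what (X ω) (A ω) * (μ (X ω) (A ω) - q (X ω) (A ω))) P →
      ∫ ω, what (X ω) (A ω) * (Y ω - q (X ω) (A ω)) ∂P
        = ∫ ω, what (X ω) (A ω) * (μ (X ω) (A ω) - q (X ω) (A ω)) ∂P := by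
    intro q h1 h2
    have h4 : ∫ ω, (what (X ω) (A ω) * (Y ω - q (X ω) (A ω))
        - what (X ω) (A ω) * (μ (X ω) (A ω) - q (X ω) (A ω))) ∂P = 0 := by
      rw [integral_congr_ae (ae_of_all _ fun ω =>
        (show what (X ω) (A ω) * (Y ω - q (X ω) (A ω))
            - what (X ω) (A ω) * (μ (X ω) (A ω) - q (X ω) (A ω))
          = what (X ω) (A ω) * (Y ω - μ (X ω) (A ω)) by ring))]
      exact htower0
    rw [integral_sub h1 h2] at h4
    linarith
  have tower₁ := tw μt hres_int hres_int''
  have tower₂ := tw μhat hres_int' hres_int'''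
  -- bound on the integral E[ŵ (Y - μhat)]
  have hI₂b : |∫ ω, what (X ω) (A ω) * (Y ω - μhat (X ω) (A ω)) ∂P| ≤ M * r₁ := by
    rw [tower₂]
    have hb : ∀ᵐ ω ∂P, ‖what (X ω) (A ω) * (μ (X ω) (A ω) - μhat (X ω) (A ω))‖ ≤ M * r₁ := by
      filter_upwards [hr₁] with ω h1
      rw [Real.norm_eq_abs, abs_mul,
        abs_of_nonneg (le_of_lt (lt_of_lt_of_le hδ (hwhat_bdd _ _).1))]
      exact mul_le_mul (hwhat_bdd _ _).2 h1 (abs_nonneg _) hMpos.le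
    calc |∫ ω, what (X ω) (A ω) * (μ (X ω) (A ω) - μhat (X ω) (A ω)) ∂P|
        = ‖∫ ω, what (X ω) (A ω) * (μ (X ω) (A ω) - μhat (X ω) (A ω)) ∂P‖ :=
          (Real.norm_eq_abs _).symm
      _ ≤ ∫ _, M * r₁ ∂P := norm_integral_le_of_norm_le (integrable_const _) hb
      _ = M * r₁ := by simp
  -- the empirical fluctuation identity
  have hn0 : (0:ℝ) < n := by exact_mod_cast hn
  have hSsum : (1 / n : ℝ) * ∑ i : Fin n, what (x i) (a i) * (μt (x i) (a i) - μhat (x i) (a i))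
      = D₂ + ∫ ω, what (X ω) (A ω) * (Y ω - μhat (X ω) (A ω)) ∂P := by
    have hsplit : ∑ i : Fin n, what (x i) (a i) * (μt (x i) (a i) - μhat (x i) (a i))
        = ∑ i : Fin n, what (x i) (a i) * (y i - μhat (x i) (a i))
          - ∑ i : Fin n, what (x i) (a i) * (y i - μt (x i) (a i)) := by
      rw [← Finset.sum_sub_distrib]
      exact Finset.sum_congr rfl fun i _ => by ring
    rw [hsplit, mul_sub, hfoc, sub_zero]
    linarith [hD₂]
  -- bound on the fluctuation parameter
  have hεb : c₀ * δ ^ 2 * |εhat| ≤ |D₂| + M * r₁ := by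
    rcases le_or_gt 0 εhat with hε | hε
    · have hsum : (n:ℝ) * (c₀ * δ ^ 2 * εhat)
          ≤ ∑ i : Fin n, what (x i) (a i) * (μt (x i) (a i) - μhat (x i) (a i)) := by
        calc (n:ℝ) * (c₀ * δ ^ 2 * εhat) = ∑ _i : Fin n, c₀ * δ ^ 2 * εhat := by
              rw [Finset.sum_const, Finset.card_univ, Fintype.card_fin, nsmul_eq_mul]
          _ ≤ _ := Finset.sum_le_sum fun i _ => (hterm _ _).1 hε
      have hS : c₀ * δ ^ 2 * εhat
          ≤ D₂ + ∫ ω, what (X ω) (A ω) * (Y ω - μhat (X ω) (A ω)) ∂P := by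
        rw [← hSsum]
        calc c₀ * δ ^ 2 * εhat = (1 / n : ℝ) * ((n:ℝ) * (c₀ * δ ^ 2 * εhat)) := by
              field_simp
          _ ≤ _ := mul_le_mul_of_nonneg_left hsum (by positivity)
      rw [abs_of_nonneg hε]
      have h5 := le_abs_self D₂
      have h6 := le_of_abs_le hI₂b
      linarith
    · have hsum : ∑ i : Fin n, what (x i) (a i) * (μt (x i) (a i) - μhat (x i) (a i))
          ≤ (n:ℝ) * (c₀ * δ ^ 2 * εhat) := by
        calc (∑ i : Fin n, what (x i) (a i) * (μt (x i) (a i) - μhat (x i) (a i)))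
            ≤ ∑ _i : Fin n, c₀ * δ ^ 2 * εhat :=
              Finset.sum_le_sum fun i _ => (hterm _ _).2 hε.le
          _ = (n:ℝ) * (c₀ * δ ^ 2 * εhat) := by
              rw [Finset.sum_const, Finset.card_univ, Fintype.card_fin, nsmul_eq_mul]
      have hS : D₂ + (∫ ω, what (X ω) (A ω) * (Y ω - μhat (X ω) (A ω)) ∂P)
          ≤ c₀ * δ ^ 2 * εhat := by
        rw [← hSsum]
        calc (1 / n : ℝ) * ∑ i : Fin n, what (x i) (a i) * (μt (x i) (a i) - μhat (x i) (a i))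
            ≤ (1 / n : ℝ) * ((n:ℝ) * (c₀ * δ ^ 2 * εhat)) :=
              mul_le_mul_of_nonneg_left hsum (by positivity)
          _ = c₀ * δ ^ 2 * εhat := by field_simp
      rw [abs_of_neg hε]
      have h5 := neg_abs_le D₂
      have h6 := neg_le_of_abs_le hI₂b
      linarith
  -- change of measure: E[(μ - μt)(X, Ã)] = E[w (μ - μt)(X, A)]
  haveI : IsProbabilityMeasure (Measure.map X P) := Measure.isProbabilityMeasure_map hX.aemeasurable
  have hμt_meas : Measurable (Function.uncurry μt) := by
    have hrw : Function.uncurry μt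
        = fun p => hfun (g (μhat p.1 p.2) + εhat * what p.1 p.2) :=
      funext fun p => hμt p.1 p.2
    rw [hrw]
    exact hdiffh.continuous.measurable.comp
      ((hg_C1.continuous.measurable.comp hμhat_meas).add (hwhat_meas.const_mul εhat))
  have hφm : Measurable fun p : (Fin d → ℝ) × ℝ => μ p.1 p.2 - μt p.1 p.2 := hμ.sub hμt_meas
  have hwφm : Measurable fun p : (Fin d → ℝ) × ℝ => w p.1 p.2 * (μ p.1 p.2 - μt p.1 p.2) :=
    hw.mul hφm
  have hint1 : Integrable (fun p : (Fin d → ℝ) × ℝ => μ p.1 p.2 - μt p.1 p.2)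
      ((Measure.map X P).compProd ν) := by
    rw [← hν]
    exact (integrable_map_measure hφm.aestronglyMeasurable hXAt.aemeasurable).mpr
      (hμAtil_int.sub hμtAtil_int)
  have hint2 : Integrable (fun p : (Fin d → ℝ) × ℝ => w p.1 p.2 * (μ p.1 p.2 - μt p.1 p.2))
      ((Measure.map X P).compProd κ) := by
    rw [← hκ]
    exact (integrable_map_measure hwφm.aestronglyMeasurable hXA.aemeasurable).mpr hres_int''''
  have com : ∫ ω, (μ (X ω) (Atil ω) - μt (X ω) (Atil ω)) ∂P
      = ∫ ω, w (X ω) (A ω) * (μ (X ω) (A ω) - μt (X ω) (A ω)) ∂P := by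
    have e1 : ∫ ω, (μ (X ω) (Atil ω) - μt (X ω) (Atil ω)) ∂P
        = ∫ p, (μ p.1 p.2 - μt p.1 p.2) ∂((Measure.map X P).compProd ν) := by
      rw [← hν, integral_map hXAt.aemeasurable hφm.aestronglyMeasurable]
    have e4 : ∫ ω, w (X ω) (A ω) * (μ (X ω) (A ω) - μt (X ω) (A ω)) ∂P
        = ∫ p, w p.1 p.2 * (μ p.1 p.2 - μt p.1 p.2) ∂((Measure.map X P).compProd κ) := by
      rw [← hκ, integral_map hXA.aemeasurable hwφm.aestronglyMeasurable]
    rw [e1, e4, Measure.integral_compProd hint1, Measure.integral_compProd hint2]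
    refine integral_congr_ae ?_
    filter_upwards [hac] with xx hx
    rw [hx]
    have hwm : Measurable fun aa => Real.toNNReal (w xx aa) :=
      (hw.comp measurable_prodMk_left).real_toNNReal
    rw [show (fun aa => ENNReal.ofReal (w xx aa))
        = fun aa => ((Real.toNNReal (w xx aa) : NNReal) : ENNReal) from rfl]
    rw [integral_withDensity_eq_integral_smul hwm]
    refine integral_congr_ae (ae_of_all _ fun aa => ?_)
    simp [NNReal.smul_def, Real.coe_toNNReal _ (hwnn xx aa)]
  -- exact error decomposition
  have hψdecomp : ψhat - ψ = D₁ + ∫ ω,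
      (what (X ω) (A ω) - w (X ω) (A ω)) * (μ (X ω) (A ω) - μt (X ω) (A ω)) ∂P := by
    have hs : (1 / n : ℝ) * ∑ i : Fin n,
        (μt (x i) (ta i) + what (x i) (a i) * (y i - μt (x i) (a i))) = ψhat := by
      rw [Finset.sum_add_distrib, mul_add, hfoc, add_zero, hψhat]
    have hi : ∫ ω, (μt (X ω) (Atil ω) + what (X ω) (A ω) * (Y ω - μt (X ω) (A ω))) ∂P
        = (∫ ω, μt (X ω) (Atil ω) ∂P)
          + ∫ ω, what (X ω) (A ω) * (Y ω - μt (X ω) (A ω)) ∂P :=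
      integral_add hμtAtil_int hres_int
    have hsub : ∫ ω, (μ (X ω) (Atil ω) - μt (X ω) (Atil ω)) ∂P
        = ψ - ∫ ω, μt (X ω) (Atil ω) ∂P := by
      rw [integral_sub hμAtil_int hμtAtil_int, hψ]
    have hprod : ∫ ω, (what (X ω) (A ω) - w (X ω) (A ω))
          * (μ (X ω) (A ω) - μt (X ω) (A ω)) ∂P
        = (∫ ω, what (X ω) (A ω) * (μ (X ω) (A ω) - μt (X ω) (A ω)) ∂P)
          - ∫ ω, w (X ω) (A ω) * (μ (X ω) (A ω) - μt (X ω) (A ω)) ∂P := by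
      rw [← integral_sub hres_int'' hres_int'''']
      exact integral_congr_ae (ae_of_all _ fun ω => by ring)
    have hD₁' : D₁ = ψhat - ((∫ ω, μt (X ω) (Atil ω) ∂P)
        + ∫ ω, what (X ω) (A ω) * (Y ω - μt (X ω) (A ω)) ∂P) := by
      rw [hD₁, hi, hs]
    linarith [hD₁', tower₁, hsub, hprod, com]
  -- bound on the product remainder
  have hRb : |∫ ω, (what (X ω) (A ω) - w (X ω) (A ω))
      * (μ (X ω) (A ω) - μt (X ω) (A ω)) ∂P| ≤ r₂ * (r₁ + C * M * |εhat|) := by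
    have hb : ∀ᵐ ω ∂P, ‖(what (X ω) (A ω) - w (X ω) (A ω))
        * (μ (X ω) (A ω) - μt (X ω) (A ω))‖ ≤ r₂ * (r₁ + C * M * |εhat|) := by
      filter_upwards [hr₁, hr₂] with ω h1 h2
      rw [Real.norm_eq_abs, abs_mul]
      have h4 := abs_sub_le (μ (X ω) (A ω)) (μhat (X ω) (A ω)) (μt (X ω) (A ω))
      rw [abs_sub_comm (μhat (X ω) (A ω)) (μt (X ω) (A ω))] at h4
      have h3 : |μ (X ω) (A ω) - μt (X ω) (A ω)| ≤ r₁ + C * M * |εhat| := by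
        linarith [hdiffb (X ω) (A ω)]
      exact mul_le_mul h2 h3 (abs_nonneg _) hr₂0
    calc |∫ ω, (what (X ω) (A ω) - w (X ω) (A ω))
          * (μ (X ω) (A ω) - μt (X ω) (A ω)) ∂P|
        = ‖∫ ω, (what (X ω) (A ω) - w (X ω) (A ω))
          * (μ (X ω) (A ω) - μt (X ω) (A ω)) ∂P‖ := (Real.norm_eq_abs _).symm
      _ ≤ ∫ _, r₂ * (r₁ + C * M * |εhat|) ∂P := norm_integral_le_of_norm_le (integrable_const _) hb
      _ = r₂ * (r₁ + C * M * |εhat|) := by simp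
  -- put everything together
  have habs : |ψhat - ψ| ≤ |D₁| + r₂ * (r₁ + C * M * |εhat|) := by
    rw [hψdecomp]
    exact (abs_add_le _ _).trans (by linarith)
  have hpos : (0:ℝ) < c₀ * δ ^ 2 := mul_pos hc₀ (pow_pos hδ 2)
  have h5 : r₂ * (C * M * |εhat|) ≤ C * M * r₂ / (c₀ * δ ^ 2) * (|D₂| + M * r₁) := by
    rw [div_mul_eq_mul_div, le_div_iff₀ hpos]
    have h6 : 0 ≤ C * M * r₂ := mul_nonneg (mul_nonneg hCpos.le hMpos.le) hr₂0
    calc r₂ * (C * M * |εhat|) * (c₀ * δ ^ 2)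
        = C * M * r₂ * (c₀ * δ ^ 2 * |εhat|) := by ring
      _ ≤ C * M * r₂ * (|D₂| + M * r₁) := mul_le_mul_of_nonneg_left hεb h6
  nlinarith [habs, h5]
end
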